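/- arXiv:2005.05111 — 5 statements merged into one kernel-verified Lean document; each statement's English description precedes it below -/
import Mathlib

section
/- (Claim 1, forward direction.) If a transition kernel p(m|x,y) is private against Alice with respect to g and private against Bob with respect to h, then for every input distribution p_XY on 𝒳×𝒴, under the joint law of (X,Y,M) given by p_XY(x,y)·p(m|x,y), with F = f(X,Y), G = g(X,Y), H = h(X,Y), the conditional mutual informations satisfy I(M;G|F,X) = 0 and I(M;H|F,Y) = 0. -/
open scoped BigOperators

/-- A probability mass function on a finite type, given as a real-valued function. -/
def IsPMF {Ω : Type*} [Fintype Ω] (p : Ω → ℝ) : Prop :=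
  (∀ ω, 0 ≤ p ω) ∧ ∑ ω, p ω = 1

open Classical in
/-- Probability of an event under a pmf on a finite type. -/
noncomputable def probOf {Ω : Type*} [Fintype Ω] (p : Ω → ℝ) (E : Ω → Prop) : ℝ :=
  ∑ ω, if E ω then p ω else 0

/-- Distribution (pushforward) of a random variable `A` under pmf `p`. -/
noncomputable def distOf {Ω β : Type*} [Fintype Ω] [DecidableEq β]
    (p : Ω → ℝ) (A : Ω → β) : β → ℝ :=
  fun b => ∑ ω, if A ω = b then p ω else 0

/-- Shannon entropy (in nats) of a distribution on a finite type. -/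
noncomputable def entD {β : Type*} [Fintype β] (q : β → ℝ) : ℝ :=
  -∑ b, q b * Real.log (q b)

/-- Shannon entropy H(A) of a random variable `A` under pmf `p`. -/
noncomputable def entRV {Ω β : Type*} [Fintype Ω] [Fintype β] [DecidableEq β]
    (p : Ω → ℝ) (A : Ω → β) : ℝ :=
  entD (distOf p A)

/-- Conditional Shannon entropy H(A | C). -/
noncomputable def condEnt {Ω β γ : Type*} [Fintype Ω] [Fintype β] [DecidableEq β]
    [Fintype γ] [DecidableEq γ] (p : Ω → ℝ) (A : Ω → β) (C : Ω → γ) : ℝ :=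
  entRV p (fun ω => (A ω, C ω)) - entRV p C

/-- Mutual information I(A; B). -/
noncomputable def mutInfo {Ω β γ : Type*} [Fintype Ω] [Fintype β] [DecidableEq β]
    [Fintype γ] [DecidableEq γ] (p : Ω → ℝ) (A : Ω → β) (B : Ω → γ) : ℝ :=
  entRV p A + entRV p B - entRV p (fun ω => (A ω, B ω))

/-- Conditional mutual information I(A; B | C). -/
noncomputable def condMutInfo {Ω β γ δ : Type*} [Fintype Ω] [Fintype β] [DecidableEq β]
    [Fintype γ] [DecidableEq γ] [Fintype δ] [DecidableEq δ]
    (p : Ω → ℝ) (A : Ω → β) (B : Ω → γ) (C : Ω → δ) : ℝ :=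
  entRV p (fun ω => (A ω, C ω)) + entRV p (fun ω => (B ω, C ω))
    - entRV p (fun ω => (A ω, B ω, C ω)) - entRV p C

/-- Privacy against Alice with respect to `g` of a transition kernel `k(m|x,y)`,
for the function `f` being computed. -/
def PrivAlice {𝒳 𝒴 𝒵 𝒢 ℳ : Type*} (f : 𝒳 → 𝒴 → 𝒵) (g : 𝒳 → 𝒴 → 𝒢)
    (k : 𝒳 → 𝒴 → ℳ → ℝ) : Prop :=
  ∀ x y₁ y₂, g x y₁ ≠ g x y₂ → f x y₁ = f x y₂ → ∀ m, k x y₁ m = k x y₂ m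

/-- Privacy against Bob with respect to `h` of a transition kernel `k(m|x,y)`,
for the function `f` being computed. -/
def PrivBob {𝒳 𝒴 𝒵 ℋ ℳ : Type*} (f : 𝒳 → 𝒴 → 𝒵) (h : 𝒳 → 𝒴 → ℋ)
    (k : 𝒳 → 𝒴 → ℳ → ℝ) : Prop :=
  ∀ x₁ x₂ y, h x₁ y ≠ h x₂ y → f x₁ y = f x₂ y → ∀ m, k x₁ y m = k x₂ y m


section AuxClaim1

set_option linter.unusedSectionVars false

/-- Auxiliary: exchange lemma for weighted sums used in Claim 1. -/
lemma claim1_key {𝒴 : Type*} [Fintype 𝒴] (a b K : 𝒴 → ℝ)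
    (hK : ∀ y1 y2, a y1 ≠ 0 → b y2 - a y2 ≠ 0 → K y1 = K y2) :
    (∑ y, a y * K y) * (∑ y, b y) = (∑ y, b y * K y) * (∑ y, a y) := by
  have h0 : ∑ y1 : 𝒴, ∑ y2 : 𝒴, a y1 * (b y2 - a y2) * (K y1 - K y2) = 0 := by
    refine Finset.sum_eq_zero fun y1 _ => Finset.sum_eq_zero fun y2 _ => ?_
    by_cases h1 : a y1 = 0
    · simp [h1]
    by_cases h2 : b y2 - a y2 = 0
    · simp [h2]
    · rw [hK y1 y2 h1 h2]; ring
  have expand : ∑ y1 : 𝒴, ∑ y2 : 𝒴, a y1 * (b y2 - a y2) * (K y1 - K y2)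
      = (∑ y, a y * K y) * (∑ y, b y) - (∑ y, a y) * (∑ y, b y * K y)
        - (∑ y, a y * K y) * (∑ y, a y) + (∑ y, a y) * (∑ y, a y * K y) := by
    rw [Finset.sum_mul_sum, Finset.sum_mul_sum, Finset.sum_mul_sum, Finset.sum_mul_sum,
      ← Finset.sum_sub_distrib, ← Finset.sum_sub_distrib, ← Finset.sum_add_distrib]
    refine Finset.sum_congr rfl fun y1 _ => ?_
    rw [← Finset.sum_sub_distrib, ← Finset.sum_sub_distrib, ← Finset.sum_add_distrib]
    exact Finset.sum_congr rfl fun y2 _ => by ring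
  rw [expand] at h0
  linear_combination h0

variable {Ω β γ δ : Type*} [Fintype Ω] [Fintype β] [DecidableEq β]
    [Fintype γ] [DecidableEq γ] [Fintype δ] [DecidableEq δ]
    (p : Ω → ℝ) (A : Ω → β) (B : Ω → γ) (C : Ω → δ)

lemma claim1_distOf_nonneg (hp : ∀ ω, 0 ≤ p ω) (A : Ω → β) (b : β) : 0 ≤ distOf p A b := by
  refine Finset.sum_nonneg fun ω _ => ?_
  split <;> simp [hp ω]

lemma claim1_margAC (a : β) (c : δ) :
    distOf p (fun ω => (A ω, C ω)) (a, c)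
      = ∑ b, distOf p (fun ω => (A ω, B ω, C ω)) (a, b, c) := by
  unfold distOf
  rw [Finset.sum_comm]
  refine Finset.sum_congr rfl fun ω _ => ?_
  simp [Prod.ext_iff, ite_and, Finset.sum_ite_eq]

lemma claim1_margBC (b : γ) (c : δ) :
    distOf p (fun ω => (B ω, C ω)) (b, c)
      = ∑ a, distOf p (fun ω => (A ω, B ω, C ω)) (a, b, c) := by
  unfold distOf
  rw [Finset.sum_comm]
  refine Finset.sum_congr rfl fun ω _ => ?_
  simp [Prod.ext_iff, ite_and, Finset.sum_ite_eq]

lemma claim1_margC (c : δ) :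
    distOf p C c = ∑ a, ∑ b, distOf p (fun ω => (A ω, B ω, C ω)) (a, b, c) := by
  have h1 : distOf p C c = ∑ a, distOf p (fun ω => (A ω, C ω)) (a, c) := by
    unfold distOf
    rw [Finset.sum_comm]
    refine Finset.sum_congr rfl fun ω _ => ?_
    simp [Prod.ext_iff, ite_and, Finset.sum_ite_eq]
  rw [h1]
  exact Finset.sum_congr rfl fun a _ => claim1_margAC p A B C a c

lemma claim1_mul_sum_helper {ι : Type*} [Fintype ι] (w : ι → ℝ) (r L : ℝ) (h : r = ∑ i, w i) :
    r * L = ∑ i, w i * L := by rw [h, Finset.sum_mul]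

/-- If the joint distribution of `(A, B, C)` factorizes conditionally on `C`,
then `I(A; B | C) = 0`. -/
lemma claim1_cmi_eq_zero (hp : ∀ ω, 0 ≤ p ω)
    (hfac : ∀ a b c, distOf p (fun ω => (A ω, B ω, C ω)) (a, b, c) * distOf p C c
      = distOf p (fun ω => (A ω, C ω)) (a, c) * distOf p (fun ω => (B ω, C ω)) (b, c)) :
    condMutInfo p A B C = 0 := by
  set q := distOf p (fun ω => (A ω, B ω, C ω)) with hq
  have hq0 : ∀ x, 0 ≤ q x := fun x => claim1_distOf_nonneg p hp _ x
  have eAC : entRV p (fun ω => (A ω, C ω))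
      = -∑ a, ∑ b, ∑ c, q (a, b, c) * Real.log (distOf p (fun ω => (A ω, C ω)) (a, c)) := by
    unfold entRV entD
    rw [Fintype.sum_prod_type]
    congr 1
    refine Finset.sum_congr rfl fun a _ => ?_
    rw [Finset.sum_comm]
    refine Finset.sum_congr rfl fun c _ => ?_
    rw [claim1_margAC p A B C a c, Finset.sum_mul]
  have eBC : entRV p (fun ω => (B ω, C ω))
      = -∑ a, ∑ b, ∑ c, q (a, b, c) * Real.log (distOf p (fun ω => (B ω, C ω)) (b, c)) := by
    unfold entRV entD
    rw [Fintype.sum_prod_type]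
    rw [show ∑ a, ∑ b, ∑ c, q (a, b, c) * Real.log (distOf p (fun ω => (B ω, C ω)) (b, c))
        = ∑ b, ∑ a, ∑ c, q (a, b, c) * Real.log (distOf p (fun ω => (B ω, C ω)) (b, c))
      from Finset.sum_comm]
    congr 1
    refine Finset.sum_congr rfl fun b _ => ?_
    rw [Finset.sum_comm]
    refine Finset.sum_congr rfl fun c _ => ?_
    rw [claim1_margBC p A B C b c, Finset.sum_mul]
  have eC : entRV p C = -∑ a, ∑ b, ∑ c, q (a, b, c) * Real.log (distOf p C c) := by
    unfold entRV entD
    congr 1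
    have step : ∀ c, distOf p C c * Real.log (distOf p C c)
        = ∑ a, ∑ b, q (a, b, c) * Real.log (distOf p C c) := by
      intro c
      rw [claim1_mul_sum_helper (fun a => ∑ b, q (a, b, c)) _ _ (claim1_margC p A B C c)]
      exact Finset.sum_congr rfl fun a _ => Finset.sum_mul _ _ _
    calc ∑ c, distOf p C c * Real.log (distOf p C c)
        = ∑ c, ∑ a, ∑ b, q (a, b, c) * Real.log (distOf p C c) :=
          Finset.sum_congr rfl fun c _ => step c
      _ = ∑ a, ∑ c, ∑ b, q (a, b, c) * Real.log (distOf p C c) := Finset.sum_comm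
      _ = ∑ a, ∑ b, ∑ c, q (a, b, c) * Real.log (distOf p C c) :=
          Finset.sum_congr rfl fun a _ => Finset.sum_comm
  have eABC : entRV p (fun ω => (A ω, B ω, C ω))
      = -∑ a, ∑ b, ∑ c, q (a, b, c) * Real.log (q (a, b, c)) := by
    unfold entRV entD
    rw [← hq, Fintype.sum_prod_type]
    congr 1
    exact Finset.sum_congr rfl fun a _ => Fintype.sum_prod_type _
  unfold condMutInfo
  rw [eAC, eBC, eC, eABC]
  have key : ∀ a b c, q (a, b, c) * Real.log (q (a, b, c))
      + q (a, b, c) * Real.log (distOf p C c)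
      = q (a, b, c) * Real.log (distOf p (fun ω => (A ω, C ω)) (a, c))
      + q (a, b, c) * Real.log (distOf p (fun ω => (B ω, C ω)) (b, c)) := by
    intro a b c
    by_cases h0 : q (a, b, c) = 0
    · simp [h0]
    have hqpos : 0 < q (a, b, c) := lt_of_le_of_ne (hq0 _) (Ne.symm h0)
    have hACpos : 0 < distOf p (fun ω => (A ω, C ω)) (a, c) := by
      rw [claim1_margAC p A B C a c]
      exact lt_of_lt_of_le hqpos
        (Finset.single_le_sum (fun b' _ => hq0 (a, b', c)) (Finset.mem_univ b))
    have hBCpos : 0 < distOf p (fun ω => (B ω, C ω)) (b, c) := by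
      rw [claim1_margBC p A B C b c]
      exact lt_of_lt_of_le hqpos
        (Finset.single_le_sum (fun a' _ => hq0 (a', b, c)) (Finset.mem_univ a))
    have hCpos : 0 < distOf p C c := by
      nlinarith [hfac a b c]
    rw [← mul_add, ← mul_add, ← Real.log_mul (ne_of_gt hqpos) (ne_of_gt hCpos),
      ← Real.log_mul (ne_of_gt hACpos) (ne_of_gt hBCpos), hfac a b c]
  have hsum : ∑ a, ∑ b, ∑ c, (q (a, b, c) * Real.log (q (a, b, c))
      + q (a, b, c) * Real.log (distOf p C c))
      = ∑ a, ∑ b, ∑ c, (q (a, b, c) * Real.log (distOf p (fun ω => (A ω, C ω)) (a, c))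
      + q (a, b, c) * Real.log (distOf p (fun ω => (B ω, C ω)) (b, c))) :=
    Finset.sum_congr rfl fun a _ => Finset.sum_congr rfl fun b _ =>
      Finset.sum_congr rfl fun c _ => key a b c
  simp only [Finset.sum_add_distrib] at hsum
  linarith

lemma claim1_sum_ite_const {ι : Type*} [Fintype ι] (P : Prop) [Decidable P] (f : ι → ℝ) :
    (∑ i, if P then f i else 0) = if P then ∑ i, f i else 0 := by
  split_ifs <;> simp

end AuxClaim1

/-- **Claim 1, forward direction.** If the transition kernel `k(m|x,y)` is private against
Alice with respect to `g` and private against Bob with respect to `h`, then for every input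
distribution `pXY` on `𝒳 × 𝒴`, under the joint law `pXY(x,y) · k(m|x,y)` of `(X, Y, M)`,
with `F = f(X,Y)`, `G = g(X,Y)`, `H = h(X,Y)`, we have
`I(M; G | F, X) = 0` and `I(M; H | F, Y) = 0`. -/
theorem claim1_forward
    {𝒳 𝒴 𝒵 𝒢 ℋ ℳ : Type}
    [Fintype 𝒳] [DecidableEq 𝒳] [Fintype 𝒴] [DecidableEq 𝒴]
    [Fintype 𝒵] [DecidableEq 𝒵] [Fintype 𝒢] [DecidableEq 𝒢]
    [Fintype ℋ] [DecidableEq ℋ] [Fintype ℳ] [DecidableEq ℳ]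
    (f : 𝒳 → 𝒴 → 𝒵) (g : 𝒳 → 𝒴 → 𝒢) (h : 𝒳 → 𝒴 → ℋ)
    (k : 𝒳 → 𝒴 → ℳ → ℝ)
    (hker : ∀ x y, (∀ m, 0 ≤ k x y m) ∧ ∑ m, k x y m = 1)
    (hA : PrivAlice f g k) (hB : PrivBob f h k) :
    ∀ pXY : 𝒳 × 𝒴 → ℝ, IsPMF pXY →
      condMutInfo (fun ω : (𝒳 × 𝒴) × ℳ => pXY ω.1 * k ω.1.1 ω.1.2 ω.2)
          (fun ω => ω.2) (fun ω => g ω.1.1 ω.1.2)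
          (fun ω => (f ω.1.1 ω.1.2, ω.1.1)) = 0 ∧
      condMutInfo (fun ω : (𝒳 × 𝒴) × ℳ => pXY ω.1 * k ω.1.1 ω.1.2 ω.2)
          (fun ω => ω.2) (fun ω => h ω.1.1 ω.1.2)
          (fun ω => (f ω.1.1 ω.1.2, ω.1.2)) = 0 := by
  intro pXY hpmf
  set p : (𝒳 × 𝒴) × ℳ → ℝ := fun ω => pXY ω.1 * k ω.1.1 ω.1.2 ω.2 with hp
  have hp0 : ∀ ω, 0 ≤ p ω := fun ω => mul_nonneg (hpmf.1 ω.1) ((hker ω.1.1 ω.1.2).1 ω.2)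
  constructor
  · refine claim1_cmi_eq_zero p _ _ _ hp0 ?_
    rintro m g0 ⟨z, x0⟩
    have L1 : distOf p (fun ω => (ω.2, g ω.1.1 ω.1.2, (f ω.1.1 ω.1.2, ω.1.1))) (m, g0, (z, x0))
        = ∑ s : 𝒳 × 𝒴, (if (g s.1 s.2, (f s.1 s.2, s.1)) = (g0, (z, x0)) then pXY s else 0)
            * k s.1 s.2 m := by
      unfold distOf
      rw [Fintype.sum_prod_type]
      refine Finset.sum_congr rfl fun s _ => ?_
      simp [hp, Prod.ext_iff, ite_and, Finset.sum_ite_eq, Finset.sum_ite_eq', ite_mul, zero_mul]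
    have L2 : distOf p (fun ω => (g ω.1.1 ω.1.2, (f ω.1.1 ω.1.2, ω.1.1))) (g0, (z, x0))
        = ∑ s : 𝒳 × 𝒴,
            (if (g s.1 s.2, (f s.1 s.2, s.1)) = (g0, (z, x0)) then pXY s else 0) := by
      unfold distOf
      rw [Fintype.sum_prod_type]
      refine Finset.sum_congr rfl fun s _ => ?_
      simp only [hp]
      rw [claim1_sum_ite_const]
      rw [← Finset.mul_sum, (hker s.1 s.2).2, mul_one]
    have L3 : distOf p (fun ω => (ω.2, (f ω.1.1 ω.1.2, ω.1.1))) (m, (z, x0))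
        = ∑ s : 𝒳 × 𝒴, (if (f s.1 s.2, s.1) = (z, x0) then pXY s else 0) * k s.1 s.2 m := by
      unfold distOf
      rw [Fintype.sum_prod_type]
      refine Finset.sum_congr rfl fun s _ => ?_
      simp [hp, Prod.ext_iff, ite_and, Finset.sum_ite_eq, Finset.sum_ite_eq', ite_mul, zero_mul]
    have L4 : distOf p (fun ω => (f ω.1.1 ω.1.2, ω.1.1)) (z, x0)
        = ∑ s : 𝒳 × 𝒴, (if (f s.1 s.2, s.1) = (z, x0) then pXY s else 0) := by
      unfold distOf
      rw [Fintype.sum_prod_type]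
      refine Finset.sum_congr rfl fun s _ => ?_
      simp only [hp]
      rw [claim1_sum_ite_const]
      rw [← Finset.mul_sum, (hker s.1 s.2).2, mul_one]
    rw [L1, L2, L3, L4]
    refine claim1_key _ _ (fun s : 𝒳 × 𝒴 => k s.1 s.2 m) ?_
    intro s1 s2 h1 h2
    have ha1 : (g s1.1 s1.2, (f s1.1 s1.2, s1.1)) = (g0, (z, x0)) := by
      by_contra hc; exact h1 (if_neg hc)
    have hb2 : (f s2.1 s2.2, s2.1) = (z, x0) := by
      by_contra hc
      have hac : ¬ (g s2.1 s2.2, (f s2.1 s2.2, s2.1)) = (g0, (z, x0)) := by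
        intro he
        exact hc (congrArg Prod.snd he)
      rw [if_neg hc, if_neg hac] at h2
      exact h2 (by ring)
    have hg2 : g s2.1 s2.2 ≠ g0 := by
      intro he
      have hac : (g s2.1 s2.2, (f s2.1 s2.2, s2.1)) = (g0, (z, x0)) := by
        rw [he, hb2]
      rw [if_pos hb2, if_pos hac] at h2
      exact h2 (by ring)
    obtain ⟨hg1, hf1, hx1⟩ : g s1.1 s1.2 = g0 ∧ f s1.1 s1.2 = z ∧ s1.1 = x0 := by
      simpa [Prod.ext_iff] using ha1
    obtain ⟨hf2, hx2⟩ : f s2.1 s2.2 = z ∧ s2.1 = x0 := by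
      simpa [Prod.ext_iff] using hb2
    subst hx1
    show k s1.1 s1.2 m = k s2.1 s2.2 m
    rw [hx2] at hg2 hf2 ⊢
    exact hA s1.1 s1.2 s2.2 (fun e => hg2 (by rw [← e]; exact hg1)) (hf1.trans hf2.symm) m
  · refine claim1_cmi_eq_zero p _ _ _ hp0 ?_
    rintro m h0 ⟨z, y0⟩
    have L1 : distOf p (fun ω => (ω.2, h ω.1.1 ω.1.2, (f ω.1.1 ω.1.2, ω.1.2))) (m, h0, (z, y0))
        = ∑ s : 𝒳 × 𝒴, (if (h s.1 s.2, (f s.1 s.2, s.2)) = (h0, (z, y0)) then pXY s else 0)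
            * k s.1 s.2 m := by
      unfold distOf
      rw [Fintype.sum_prod_type]
      refine Finset.sum_congr rfl fun s _ => ?_
      simp [hp, Prod.ext_iff, ite_and, Finset.sum_ite_eq, Finset.sum_ite_eq', ite_mul, zero_mul]
    have L2 : distOf p (fun ω => (h ω.1.1 ω.1.2, (f ω.1.1 ω.1.2, ω.1.2))) (h0, (z, y0))
        = ∑ s : 𝒳 × 𝒴,
            (if (h s.1 s.2, (f s.1 s.2, s.2)) = (h0, (z, y0)) then pXY s else 0) := by
      unfold distOf
      rw [Fintype.sum_prod_type]
      refine Finset.sum_congr rfl fun s _ => ?_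
      simp only [hp]
      rw [claim1_sum_ite_const]
      rw [← Finset.mul_sum, (hker s.1 s.2).2, mul_one]
    have L3 : distOf p (fun ω => (ω.2, (f ω.1.1 ω.1.2, ω.1.2))) (m, (z, y0))
        = ∑ s : 𝒳 × 𝒴, (if (f s.1 s.2, s.2) = (z, y0) then pXY s else 0) * k s.1 s.2 m := by
      unfold distOf
      rw [Fintype.sum_prod_type]
      refine Finset.sum_congr rfl fun s _ => ?_
      simp [hp, Prod.ext_iff, ite_and, Finset.sum_ite_eq, Finset.sum_ite_eq', ite_mul, zero_mul]
    have L4 : distOf p (fun ω => (f ω.1.1 ω.1.2, ω.1.2)) (z, y0)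
        = ∑ s : 𝒳 × 𝒴, (if (f s.1 s.2, s.2) = (z, y0) then pXY s else 0) := by
      unfold distOf
      rw [Fintype.sum_prod_type]
      refine Finset.sum_congr rfl fun s _ => ?_
      simp only [hp]
      rw [claim1_sum_ite_const]
      rw [← Finset.mul_sum, (hker s.1 s.2).2, mul_one]
    rw [L1, L2, L3, L4]
    refine claim1_key _ _ (fun s : 𝒳 × 𝒴 => k s.1 s.2 m) ?_
    intro s1 s2 h1 h2
    have ha1 : (h s1.1 s1.2, (f s1.1 s1.2, s1.2)) = (h0, (z, y0)) := by
      by_contra hc; exact h1 (if_neg hc)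
    have hb2 : (f s2.1 s2.2, s2.2) = (z, y0) := by
      by_contra hc
      have hac : ¬ (h s2.1 s2.2, (f s2.1 s2.2, s2.2)) = (h0, (z, y0)) := by
        intro he
        exact hc (congrArg Prod.snd he)
      rw [if_neg hc, if_neg hac] at h2
      exact h2 (by ring)
    have hh2 : h s2.1 s2.2 ≠ h0 := by
      intro he
      have hac : (h s2.1 s2.2, (f s2.1 s2.2, s2.2)) = (h0, (z, y0)) := by
        rw [he, hb2]
      rw [if_pos hb2, if_pos hac] at h2
      exact h2 (by ring)
    obtain ⟨hh1, hf1, hy1⟩ : h s1.1 s1.2 = h0 ∧ f s1.1 s1.2 = z ∧ s1.2 = y0 := by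
      simpa [Prod.ext_iff] using ha1
    obtain ⟨hf2, hy2⟩ : f s2.1 s2.2 = z ∧ s2.2 = y0 := by
      simpa [Prod.ext_iff] using hb2
    subst hy1
    show k s1.1 s1.2 m = k s2.1 s2.2 m
    rw [hy2] at hh2 hf2 ⊢
    exact hB s1.1 s2.1 s1.2 (fun e => hh2 (by rw [← e]; exact hh1)) (hf1.trans hf2.symm) m
end

section
/- (Claim 1, converse direction.) If a transition kernel p(m|x,y) is such that for every input distribution p_XY on 𝒳×𝒴, under the joint law of (X,Y,M) given by p_XY(x,y)·p(m|x,y), with F = f(X,Y), G = g(X,Y), H = h(X,Y), one has I(M;G|F,X) = 0 and I(M;H|F,Y) = 0, then the kernel is private against Alice with respect to g and private against Bob with respect to h. -/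
open scoped BigOperators

section Claim1Aux
open Real Finset

private lemma entD_eq_sum {β : Type*} [Fintype β] (q : β → ℝ) :
    entD q = ∑ b, Real.negMulLog (q b) := by
  simp [entD, Real.negMulLog_eq_neg, Finset.sum_neg_distrib]

private lemma mid_ineq {a b : ℝ} (ha : 0 ≤ a) (hb : 0 ≤ b) :
    (Real.negMulLog a + Real.negMulLog b) / 2 ≤ Real.negMulLog ((a + b) / 2) := by
  have := Real.concaveOn_negMulLog.2 (Set.mem_Ici.2 ha) (Set.mem_Ici.2 hb)
    (by norm_num : (0:ℝ) ≤ 1/2) (by norm_num : (0:ℝ) ≤ 1/2) (by norm_num)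
  simp only [smul_eq_mul] at this
  calc (Real.negMulLog a + Real.negMulLog b) / 2
      = 1/2 * Real.negMulLog a + 1/2 * Real.negMulLog b := by ring
    _ ≤ Real.negMulLog (1/2 * a + 1/2 * b) := this
    _ = Real.negMulLog ((a + b) / 2) := by ring_nf

private lemma mid_eq {a b : ℝ} (ha : 0 ≤ a) (hb : 0 ≤ b)
    (h : Real.negMulLog ((a + b) / 2) - (Real.negMulLog a + Real.negMulLog b) / 2 = 0) :
    a = b := by
  by_contra hne
  have := Real.strictConcaveOn_negMulLog.2 (Set.mem_Ici.2 ha) (Set.mem_Ici.2 hb) hne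
    (by norm_num : (0:ℝ) < 1/2) (by norm_num : (0:ℝ) < 1/2) (by norm_num)
  simp only [smul_eq_mul] at this
  have h2 : Real.negMulLog (1/2 * a + 1/2 * b) = Real.negMulLog ((a+b)/2) := by ring_nf
  rw [h2] at this
  linarith

private lemma negMulLog_half (t : ℝ) :
    Real.negMulLog (t / 2) = Real.negMulLog t / 2 + t / 2 * Real.log 2 := by
  rcases eq_or_ne t 0 with rfl | ht
  · simp
  · rw [Real.negMulLog, Real.negMulLog, Real.log_div ht (by norm_num)]
    ring

private lemma sum_negMulLog_pair {β : Type*} [Fintype β] [DecidableEq β]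
    {p₁ p₂ : β} (hp : p₁ ≠ p₂) (u v : ℝ) :
    ∑ b, Real.negMulLog (if p₁ = b then u else if p₂ = b then v else 0)
      = Real.negMulLog u + Real.negMulLog v := by
  rw [← Finset.sum_subset (Finset.subset_univ {p₁, p₂})]
  · rw [Finset.sum_pair hp]
    simp [hp, Ne.symm hp]
  · intro b _ hb
    simp only [Finset.mem_insert, Finset.mem_singleton, not_or] at hb
    simp [Ne.symm hb.1, Ne.symm hb.2]

private lemma distOf_two {S ℳ β : Type*} [Fintype S] [DecidableEq S] [Fintype ℳ]
    [DecidableEq β] (k : S → ℳ → ℝ) (s₁ s₂ : S) (hs : s₁ ≠ s₂) (A : S × ℳ → β) (b : β) :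
    distOf (fun ω : S × ℳ =>
        (if ω.1 = s₁ then (1:ℝ)/2 else if ω.1 = s₂ then 1/2 else 0) * k ω.1 ω.2) A b
      = (∑ m, if A (s₁, m) = b then k s₁ m else 0) / 2
        + (∑ m, if A (s₂, m) = b then k s₂ m else 0) / 2 := by
  classical
  rw [distOf, Fintype.sum_prod_type]
  have h1 : ∀ s : S,
      (∑ m, if A (s, m) = b then
          (if s = s₁ then (1:ℝ)/2 else if s = s₂ then 1/2 else 0) * k s m else 0)
      = (if s = s₁ then (1:ℝ)/2 else if s = s₂ then 1/2 else 0)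
          * ∑ m, if A (s, m) = b then k s m else 0 := by
    intro s
    rw [Finset.mul_sum]
    refine Finset.sum_congr rfl fun m _ => ?_
    split <;> simp
  simp_rw [h1]
  rw [← Finset.sum_subset (Finset.subset_univ {s₁, s₂})]
  · rw [Finset.sum_pair hs]
    simp [hs, Ne.symm hs]
    ring
  · intro s _ hsm
    simp only [Finset.mem_insert, Finset.mem_singleton, not_or] at hsm
    simp [hsm.1, hsm.2]

private lemma key {S ℳ 𝒢 γ : Type*} [Fintype S] [DecidableEq S] [Fintype ℳ] [DecidableEq ℳ]
    [Fintype 𝒢] [DecidableEq 𝒢] [Fintype γ] [DecidableEq γ]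
    (k : S → ℳ → ℝ) (hker : ∀ s, (∀ m, 0 ≤ k s m) ∧ ∑ m, k s m = 1)
    (s₁ s₂ : S) (hs : s₁ ≠ s₂)
    (G : S → 𝒢) (hG : G s₁ ≠ G s₂) (C : S → γ) (hC : C s₁ = C s₂)
    (h0 : condMutInfo (fun ω : S × ℳ =>
        (if ω.1 = s₁ then (1:ℝ)/2 else if ω.1 = s₂ then 1/2 else 0) * k ω.1 ω.2)
      (fun ω => ω.2) (fun ω => G ω.1) (fun ω => C ω.1) = 0) :
    ∀ m, k s₁ m = k s₂ m := by
  classical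
  set p : S × ℳ → ℝ := fun ω =>
    (if ω.1 = s₁ then (1:ℝ)/2 else if ω.1 = s₂ then 1/2 else 0) * k ω.1 ω.2 with hp
  have hpne : (G s₁, C s₁) ≠ (G s₂, C s₁) := fun h => hG (congrArg Prod.fst h)
  -- entropy of C
  have eC : entRV p (fun ω : S × ℳ => C ω.1) = 0 := by
    rw [entRV, entD_eq_sum]
    have hd : ∀ b, distOf p (fun ω : S × ℳ => C ω.1) b = if C s₁ = b then 1 else 0 := by
      intro b
      rw [hp]
      simp only [distOf_two k s₁ s₂ hs, ← hC]
      have e1 : (∑ m, if C s₁ = b then k s₁ m else 0) = if C s₁ = b then 1 else 0 := by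
        split <;> simp [(hker s₁).2]
      have e2 : (∑ m, if C s₁ = b then k s₂ m else 0) = if C s₁ = b then 1 else 0 := by
        split <;> simp [(hker s₂).2]
      rw [e1, e2]; split <;> norm_num
    simp_rw [hd, apply_ite Real.negMulLog]
    simp
  -- entropy of (M, C)
  have eAC : entRV p (fun ω : S × ℳ => (ω.2, C ω.1))
      = ∑ m, Real.negMulLog ((k s₁ m + k s₂ m) / 2) := by
    rw [entRV, entD_eq_sum, Fintype.sum_prod_type]
    have hd : ∀ (m₀ : ℳ) (c : γ), distOf p (fun ω : S × ℳ => (ω.2, C ω.1)) (m₀, c)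
        = if C s₁ = c then (k s₁ m₀ + k s₂ m₀) / 2 else 0 := by
      intro m₀ c
      rw [hp]
      simp only [distOf_two k s₁ s₂ hs, Prod.mk.injEq, ite_and, ← hC,
        Finset.sum_ite_eq', Finset.mem_univ, if_true]
      split <;> ring
    simp_rw [hd, apply_ite Real.negMulLog, Real.negMulLog_zero, Finset.sum_ite_eq,
      Finset.mem_univ, if_true]
  -- entropy of (G, C)
  have eBC : entRV p (fun ω : S × ℳ => (G ω.1, C ω.1))
      = Real.negMulLog (1/2) + Real.negMulLog (1/2) := by
    rw [entRV, entD_eq_sum]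
    have hd : ∀ b, distOf p (fun ω : S × ℳ => (G ω.1, C ω.1)) b
        = if (G s₁, C s₁) = b then 1/2 else if (G s₂, C s₁) = b then 1/2 else 0 := by
      intro b
      rw [hp]
      simp only [distOf_two k s₁ s₂ hs, ← hC]
      have e1 : (∑ m, if (G s₁, C s₁) = b then k s₁ m else 0)
          = if (G s₁, C s₁) = b then 1 else 0 := by split <;> simp [(hker s₁).2]
      have e2 : (∑ m, if (G s₂, C s₁) = b then k s₂ m else 0)
          = if (G s₂, C s₁) = b then 1 else 0 := by split <;> simp [(hker s₂).2]
      rw [e1, e2]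
      by_cases h1 : (G s₁, C s₁) = b
      · have h2 : (G s₂, C s₁) ≠ b := fun h => hpne (h1.trans h.symm)
        simp [h1, h2]
      · simp only [h1, if_false]
        split <;> norm_num
    simp_rw [hd]
    exact sum_negMulLog_pair hpne (1/2) (1/2)
  -- entropy of (M, G, C)
  have eABC : entRV p (fun ω : S × ℳ => (ω.2, G ω.1, C ω.1))
      = ∑ m, (Real.negMulLog (k s₁ m / 2) + Real.negMulLog (k s₂ m / 2)) := by
    rw [entRV, entD_eq_sum, Fintype.sum_prod_type]
    have hd : ∀ (m₀ : ℳ) (bc : 𝒢 × γ),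
        distOf p (fun ω : S × ℳ => (ω.2, G ω.1, C ω.1)) (m₀, bc)
        = if (G s₁, C s₁) = bc then k s₁ m₀ / 2
          else if (G s₂, C s₁) = bc then k s₂ m₀ / 2 else 0 := by
      intro m₀ bc
      rw [hp]
      simp only [distOf_two k s₁ s₂ hs, Prod.mk.injEq, ite_and, ← hC,
        Finset.sum_ite_eq', Finset.mem_univ, if_true]
      by_cases h1 : (G s₁, C s₁) = bc
      · have h2 : (G s₂, C s₁) ≠ bc := fun h => hpne (h1.trans h.symm)
        simp [h1, h2]
      · simp only [h1, if_false]
        split <;> ring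
    refine Finset.sum_congr rfl fun m₀ _ => ?_
    simp_rw [hd]
    exact sum_negMulLog_pair hpne _ _
  -- assemble
  have hhalf : Real.negMulLog ((1:ℝ)/2) = Real.log 2 / 2 := by
    have := negMulLog_half 1
    simp only [Real.negMulLog_one] at this
    rw [this]; ring
  have e4 : ∑ m, (Real.negMulLog (k s₁ m / 2) + Real.negMulLog (k s₂ m / 2))
      = (∑ m, (Real.negMulLog (k s₁ m) + Real.negMulLog (k s₂ m)) / 2) + Real.log 2 := by
    have e : ∀ m : ℳ, Real.negMulLog (k s₁ m / 2) + Real.negMulLog (k s₂ m / 2)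
        = (Real.negMulLog (k s₁ m) + Real.negMulLog (k s₂ m)) / 2
          + (k s₁ m + k s₂ m) / 2 * Real.log 2 := by
      intro m; rw [negMulLog_half, negMulLog_half]; ring
    simp_rw [e]
    rw [Finset.sum_add_distrib]
    congr 1
    rw [← Finset.sum_mul, ← Finset.sum_div, Finset.sum_add_distrib, (hker s₁).2, (hker s₂).2]
    norm_num
  rw [condMutInfo] at h0
  rw [eC, eAC, eBC, eABC, e4, hhalf] at h0
  have hsum : ∑ m, (Real.negMulLog ((k s₁ m + k s₂ m) / 2)
      - (Real.negMulLog (k s₁ m) + Real.negMulLog (k s₂ m)) / 2) = 0 := by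
    rw [Finset.sum_sub_distrib]
    linarith
  have hnn : ∀ m ∈ (Finset.univ : Finset ℳ),
      0 ≤ Real.negMulLog ((k s₁ m + k s₂ m) / 2)
        - (Real.negMulLog (k s₁ m) + Real.negMulLog (k s₂ m)) / 2 := by
    intro m _
    have := mid_ineq ((hker s₁).1 m) ((hker s₂).1 m)
    linarith
  have hz := (Finset.sum_eq_zero_iff_of_nonneg hnn).1 hsum
  intro m
  exact mid_eq ((hker s₁).1 m) ((hker s₂).1 m) (hz m (Finset.mem_univ m))

private lemma twoPMF {S : Type*} [Fintype S] [DecidableEq S] {s₁ s₂ : S} (hs : s₁ ≠ s₂) :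
    IsPMF (fun s => if s = s₁ then (1:ℝ)/2 else if s = s₂ then 1/2 else 0) := by
  constructor
  · intro s
    dsimp only
    split_ifs <;> norm_num
  · have e : ∀ s : S, (if s = s₁ then (1:ℝ)/2 else if s = s₂ then 1/2 else 0)
        = (if s = s₁ then (1:ℝ)/2 else 0) + (if s = s₂ then 1/2 else 0) := by
      intro s
      split_ifs with h1 h2
      · exact absurd (h1.symm.trans h2) hs
      · norm_num
      · norm_num
      · norm_num
    simp_rw [e]
    rw [Finset.sum_add_distrib]
    simp [Finset.sum_ite_eq']
    norm_num

end Claim1Aux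


/-- **Claim 1, converse direction.** If the transition kernel `k(m|x,y)` is such that for
every input distribution `pXY` on `𝒳 × 𝒴`, under the joint law `pXY(x,y) · k(m|x,y)` of
`(X, Y, M)`, with `F = f(X,Y)`, `G = g(X,Y)`, `H = h(X,Y)`, one has `I(M; G | F, X) = 0`
and `I(M; H | F, Y) = 0`, then the kernel is private against Alice with respect to `g`
and private against Bob with respect to `h`. -/
theorem claim1_converse
    {𝒳 𝒴 𝒵 𝒢 ℋ ℳ : Type}
    [Fintype 𝒳] [DecidableEq 𝒳] [Fintype 𝒴] [DecidableEq 𝒴]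
    [Fintype 𝒵] [DecidableEq 𝒵] [Fintype 𝒢] [DecidableEq 𝒢]
    [Fintype ℋ] [DecidableEq ℋ] [Fintype ℳ] [DecidableEq ℳ]
    (f : 𝒳 → 𝒴 → 𝒵) (g : 𝒳 → 𝒴 → 𝒢) (h : 𝒳 → 𝒴 → ℋ)
    (k : 𝒳 → 𝒴 → ℳ → ℝ)
    (hker : ∀ x y, (∀ m, 0 ≤ k x y m) ∧ ∑ m, k x y m = 1)
    (hzero : ∀ pXY : 𝒳 × 𝒴 → ℝ, IsPMF pXY →
      condMutInfo (fun ω : (𝒳 × 𝒴) × ℳ => pXY ω.1 * k ω.1.1 ω.1.2 ω.2)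
          (fun ω => ω.2) (fun ω => g ω.1.1 ω.1.2)
          (fun ω => (f ω.1.1 ω.1.2, ω.1.1)) = 0 ∧
      condMutInfo (fun ω : (𝒳 × 𝒴) × ℳ => pXY ω.1 * k ω.1.1 ω.1.2 ω.2)
          (fun ω => ω.2) (fun ω => h ω.1.1 ω.1.2)
          (fun ω => (f ω.1.1 ω.1.2, ω.1.2)) = 0) :
    PrivAlice f g k ∧ PrivBob f h k := by
  constructor
  · intro x y₁ y₂ hg hf m
    have hy : y₁ ≠ y₂ := fun e => hg (by rw [e])
    have hs : ((x, y₁) : 𝒳 × 𝒴) ≠ (x, y₂) := fun e => hy (congrArg Prod.snd e)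
    have h0 := (hzero
      (fun s => if s = (x, y₁) then (1:ℝ)/2 else if s = (x, y₂) then 1/2 else 0)
      (twoPMF hs)).1
    have h0' : condMutInfo (fun ω : (𝒳 × 𝒴) × ℳ =>
        (if ω.1 = (x, y₁) then (1:ℝ)/2 else if ω.1 = (x, y₂) then 1/2 else 0)
          * (fun (s : 𝒳 × 𝒴) (m : ℳ) => k s.1 s.2 m) ω.1 ω.2)
        (fun ω => ω.2) (fun ω => (fun s : 𝒳 × 𝒴 => g s.1 s.2) ω.1)
        (fun ω => (fun s : 𝒳 × 𝒴 => (f s.1 s.2, s.1)) ω.1) = 0 := h0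
    have hC : (fun s : 𝒳 × 𝒴 => (f s.1 s.2, s.1)) (x, y₁)
        = (fun s : 𝒳 × 𝒴 => (f s.1 s.2, s.1)) (x, y₂) := by
      simp only [Prod.mk.injEq]; exact ⟨hf, trivial⟩
    have hres := key (S := 𝒳 × 𝒴) (ℳ := ℳ) (𝒢 := 𝒢) (γ := 𝒵 × 𝒳)
      (fun s m => k s.1 s.2 m) (fun s => hker s.1 s.2) (x, y₁) (x, y₂) hs
      (fun s => g s.1 s.2) hg (fun s => (f s.1 s.2, s.1)) hC h0'
    exact hres m
  · intro x₁ x₂ y hh hf m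
    have hx : x₁ ≠ x₂ := fun e => hh (by rw [e])
    have hs : ((x₁, y) : 𝒳 × 𝒴) ≠ (x₂, y) := fun e => hx (congrArg Prod.fst e)
    have h0 := (hzero
      (fun s => if s = (x₁, y) then (1:ℝ)/2 else if s = (x₂, y) then 1/2 else 0)
      (twoPMF hs)).2
    have h0' : condMutInfo (fun ω : (𝒳 × 𝒴) × ℳ =>
        (if ω.1 = (x₁, y) then (1:ℝ)/2 else if ω.1 = (x₂, y) then 1/2 else 0)
          * (fun (s : 𝒳 × 𝒴) (m : ℳ) => k s.1 s.2 m) ω.1 ω.2)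
        (fun ω => ω.2) (fun ω => (fun s : 𝒳 × 𝒴 => h s.1 s.2) ω.1)
        (fun ω => (fun s : 𝒳 × 𝒴 => (f s.1 s.2, s.2)) ω.1) = 0 := h0
    have hC : (fun s : 𝒳 × 𝒴 => (f s.1 s.2, s.2)) (x₁, y)
        = (fun s : 𝒳 × 𝒴 => (f s.1 s.2, s.2)) (x₂, y) := by
      simp only [Prod.mk.injEq]; exact ⟨hf, trivial⟩
    have hres := key (S := 𝒳 × 𝒴) (ℳ := ℳ) (𝒢 := ℋ) (γ := 𝒵 × 𝒴)
      (fun s m => k s.1 s.2 m) (fun s => hker s.1 s.2) (x₁, y) (x₂, y) hs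
      (fun s => h s.1 s.2) hh (fun s => (f s.1 s.2, s.2)) hC h0'
    exact hres m
end

section
/- (Combinatorial lemma used in the 'if' part of Theorem 1.) If the 𝒳×𝒴 matrix R = (f(x,y)) contains no forbidden submatrix, then R is decomposable. -/
open scoped BigOperators

/-- Transcript probability `p(m₁,…,m_t | x, y)` of an alternating interactive protocol with
`t` rounds and message alphabet `Fin mM`; Alice sends on even-indexed rounds (rounds
`0, 2, 4, …`, i.e. the 1st, 3rd, … messages) and Bob on odd-indexed rounds, each message
depending only on the sender's input and the past messages. -/
noncomputable def transProb {𝒳 𝒴 : Type*} {t mM : ℕ}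
    (alice : ∀ i : Fin t, 𝒳 → (Fin i.val → Fin mM) → Fin mM → ℝ)
    (bob : ∀ i : Fin t, 𝒴 → (Fin i.val → Fin mM) → Fin mM → ℝ)
    (x : 𝒳) (y : 𝒴) (m : Fin t → Fin mM) : ℝ :=
  ∏ i : Fin t,
    if i.val % 2 = 0 then alice i x (fun j => m (Fin.castLE i.isLt.le j)) (m i)
    else bob i y (fun j => m (Fin.castLE i.isLt.le j)) (m i)

/-- The relation `x₁ ∼ x₂` on `C` (relative to the submatrix `C × D`):
there is `y ∈ D` with `g x₁ y ≠ g x₂ y` and `f x₁ y = f x₂ y`. -/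
def simX {𝒳 𝒴 𝒵 𝒢 : Type*} (f : 𝒳 → 𝒴 → 𝒵) (g : 𝒳 → 𝒴 → 𝒢)
    (C : Set 𝒳) (D : Set 𝒴) (x₁ x₂ : 𝒳) : Prop :=
  x₁ ∈ C ∧ x₂ ∈ C ∧ ∃ y ∈ D, g x₁ y ≠ g x₂ y ∧ f x₁ y = f x₂ y

/-- The relation `y₁ ∼ y₂` on `D` (relative to the submatrix `C × D`):
there is `x ∈ C` with `h x y₁ ≠ h x y₂` and `f x y₁ = f x y₂`. -/
def simY {𝒳 𝒴 𝒵 ℋ : Type*} (f : 𝒳 → 𝒴 → 𝒵) (h : 𝒳 → 𝒴 → ℋ)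
    (C : Set 𝒳) (D : Set 𝒴) (y₁ y₂ : 𝒴) : Prop :=
  y₁ ∈ D ∧ y₂ ∈ D ∧ ∃ x ∈ C, h x y₁ ≠ h x y₂ ∧ f x y₁ = f x y₂

/-- The submatrix `C × D` of the matrix `R = (f(x,y))` is monochromatic: `f` is constant
on `C × D`. -/
def Monochromatic {𝒳 𝒴 𝒵 : Type*} (f : 𝒳 → 𝒴 → 𝒵) (C : Set 𝒳) (D : Set 𝒴) : Prop :=
  ∀ x₁ ∈ C, ∀ y₁ ∈ D, ∀ x₂ ∈ C, ∀ y₂ ∈ D, f x₁ y₁ = f x₂ y₂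

/-- The submatrix `C × D` is forbidden: it is not monochromatic, all elements of `C` are
equivalent under the reflexive-transitive closure of `∼` on `C`, and all elements of `D`
are equivalent under the reflexive-transitive closure of `∼` on `D`. -/
def Forbidden {𝒳 𝒴 𝒵 𝒢 ℋ : Type*} (f : 𝒳 → 𝒴 → 𝒵) (g : 𝒳 → 𝒴 → 𝒢) (h : 𝒳 → 𝒴 → ℋ)
    (C : Set 𝒳) (D : Set 𝒴) : Prop :=
  ¬ Monochromatic f C D ∧
  (∀ x₁ ∈ C, ∀ x₂ ∈ C, Relation.ReflTransGen (simX f g C D) x₁ x₂) ∧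
  (∀ y₁ ∈ D, ∀ y₂ ∈ D, Relation.ReflTransGen (simY f h C D) y₁ y₂)

/-- A `C × D` matrix is decomposable: it is monochromatic, or it is rows decomposable
into `t ≥ 2` nonempty parts `C₁,…,C_t` (a partition of `C` in which any `x₁ ∼ x₂` lie in
a common part) whose submatrices `Cᵢ × D` are all decomposable, or symmetrically it is
columns decomposable into decomposable submatrices `C × Dⱼ`. -/
inductive Decomposable {𝒳 𝒴 𝒵 𝒢 ℋ : Type*}
    (f : 𝒳 → 𝒴 → 𝒵) (g : 𝒳 → 𝒴 → 𝒢) (h : 𝒳 → 𝒴 → ℋ) : Set 𝒳 → Set 𝒴 → Prop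
  | mono (C : Set 𝒳) (D : Set 𝒴) (hmono : Monochromatic f C D) : Decomposable f g h C D
  | rows (C : Set 𝒳) (D : Set 𝒴) (t : ℕ) (ht : 2 ≤ t) (parts : Fin t → Set 𝒳)
      (hne : ∀ i, (parts i).Nonempty)
      (hdisj : ∀ i j, i ≠ j → Disjoint (parts i) (parts j))
      (hcover : (⋃ i, parts i) = C)
      (hsim : ∀ x₁ x₂, simX f g C D x₁ x₂ → ∀ i, x₁ ∈ parts i → x₂ ∈ parts i)
      (hrec : ∀ i, Decomposable f g h (parts i) D) : Decomposable f g h C D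
  | cols (C : Set 𝒳) (D : Set 𝒴) (t : ℕ) (ht : 2 ≤ t) (parts : Fin t → Set 𝒴)
      (hne : ∀ j, (parts j).Nonempty)
      (hdisj : ∀ i j, i ≠ j → Disjoint (parts i) (parts j))
      (hcover : (⋃ j, parts j) = D)
      (hsim : ∀ y₁ y₂, simY f h C D y₁ y₂ → ∀ j, y₁ ∈ parts j → y₂ ∈ parts j)
      (hrec : ∀ j, Decomposable f g h C (parts j)) : Decomposable f g h C D

lemma simX_symm' {𝒳 𝒴 𝒵 𝒢 : Type*} (f : 𝒳 → 𝒴 → 𝒵) (g : 𝒳 → 𝒴 → 𝒢)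
    (C : Set 𝒳) (D : Set 𝒴) {a b : 𝒳} (hab : simX f g C D a b) : simX f g C D b a := by
  obtain ⟨ha, hb, y, hy, hne, heq⟩ := hab
  exact ⟨hb, ha, y, hy, hne.symm, heq.symm⟩

lemma simY_symm' {𝒳 𝒴 𝒵 ℋ : Type*} (f : 𝒳 → 𝒴 → 𝒵) (h : 𝒳 → 𝒴 → ℋ)
    (C : Set 𝒳) (D : Set 𝒴) {a b : 𝒴} (hab : simY f h C D a b) : simY f h C D b a := by
  obtain ⟨ha, hb, x, hx, hne, heq⟩ := hab
  exact ⟨hb, ha, x, hx, hne.symm, heq.symm⟩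

lemma decomposable_aux {𝒳 𝒴 𝒵 𝒢 ℋ : Type} [Fintype 𝒳] [Fintype 𝒴]
    (f : 𝒳 → 𝒴 → 𝒵) (g : 𝒳 → 𝒴 → 𝒢) (h : 𝒳 → 𝒴 → ℋ)
    (hforb : ∀ (C : Set 𝒳) (D : Set 𝒴), ¬ Forbidden f g h C D) :
    ∀ (n : ℕ) (C : Set 𝒳) (D : Set 𝒴), C.ncard + D.ncard ≤ n →
      Decomposable f g h C D := by
  intro n
  induction n with
  | zero =>
    intro C D hn
    have hC : C = ∅ := by
      have := (Set.ncard_eq_zero (C.toFinite)).mp (by omega)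
      exact this
    refine .mono _ _ ?_
    intro x₁ hx₁
    rw [hC] at hx₁
    exact absurd hx₁ (Set.notMem_empty _)
  | succ n ih =>
    intro C D hn
    by_cases hm : Monochromatic f C D
    · exact .mono _ _ hm
    have hnf := hforb C D
    rw [Forbidden] at hnf
    push_neg at hnf
    have hcases : (∃ x₀ ∈ C, ∃ x₁ ∈ C, ¬ Relation.ReflTransGen (simX f g C D) x₀ x₁) ∨
        (∃ y₀ ∈ D, ∃ y₁ ∈ D, ¬ Relation.ReflTransGen (simY f h C D) y₀ y₁) := by
      by_cases hA : ∀ x₁ ∈ C, ∀ x₂ ∈ C, Relation.ReflTransGen (simX f g C D) x₁ x₂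
      · exact Or.inr (hnf hm hA)
      · push_neg at hA
        exact Or.inl hA
    rcases hcases with ⟨x₀, hx₀, x₁, hx₁, hE⟩ | ⟨y₀, hy₀, y₁, hy₁, hE⟩
    · -- rows split
      set E := Relation.ReflTransGen (simX f g C D) with hEdef
      set C₁ : Set 𝒳 := {x | x ∈ C ∧ E x₀ x} with hC₁
      set C₂ : Set 𝒳 := {x | x ∈ C ∧ ¬ E x₀ x} with hC₂
      have hx₁C₂ : x₁ ∈ C₂ := ⟨hx₁, hE⟩
      have hx₀C₁ : x₀ ∈ C₁ := ⟨hx₀, Relation.ReflTransGen.refl⟩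
      refine .rows C D 2 le_rfl ![C₁, C₂] ?_ ?_ ?_ ?_ ?_
      · intro i
        fin_cases i
        · exact ⟨x₀, hx₀C₁⟩
        · exact ⟨x₁, hx₁C₂⟩
      · intro i j hij
        fin_cases i <;> fin_cases j <;> simp_all <;>
          · rw [Set.disjoint_left]
            rintro a ⟨haC, haE⟩ ⟨_, haE'⟩
            first
            | exact absurd haE haE'
            | exact absurd haE' haE
      · ext x
        simp only [Set.mem_iUnion]
        rw [Fin.exists_fin_two]
        constructor
        · rintro (⟨hx, _⟩ | ⟨hx, _⟩) <;> exact hx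
        · intro hx
          by_cases hEx : E x₀ x
          · exact Or.inl ⟨hx, hEx⟩
          · exact Or.inr ⟨hx, hEx⟩
      · intro a b hab i ha
        fin_cases i
        · exact ⟨hab.2.1, ha.2.tail hab⟩
        · refine ⟨hab.2.1, fun hEb => ha.2 (hEb.tail (simX_symm' f g C D hab))⟩
      · intro i
        have h₁ : C₁ ⊆ C := fun x hx => hx.1
        have h₂ : C₂ ⊆ C := fun x hx => hx.1
        have hlt₁ : C₁.ncard < C.ncard :=
          Set.ncard_lt_ncard (by
            rw [Set.ssubset_def]
            exact ⟨h₁, fun hsub => hE (hsub hx₁).2⟩) C.toFinite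
        have hlt₂ : C₂.ncard < C.ncard :=
          Set.ncard_lt_ncard (by
            rw [Set.ssubset_def]
            exact ⟨h₂, fun hsub => (hsub hx₀).2 Relation.ReflTransGen.refl⟩) C.toFinite
        fin_cases i
        · exact ih C₁ D (by omega)
        · exact ih C₂ D (by omega)
    · -- cols split
      set E := Relation.ReflTransGen (simY f h C D) with hEdef
      set D₁ : Set 𝒴 := {y | y ∈ D ∧ E y₀ y} with hD₁
      set D₂ : Set 𝒴 := {y | y ∈ D ∧ ¬ E y₀ y} with hD₂
      have hy₁D₂ : y₁ ∈ D₂ := ⟨hy₁, hE⟩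
      have hy₀D₁ : y₀ ∈ D₁ := ⟨hy₀, Relation.ReflTransGen.refl⟩
      refine .cols C D 2 le_rfl ![D₁, D₂] ?_ ?_ ?_ ?_ ?_
      · intro i
        fin_cases i
        · exact ⟨y₀, hy₀D₁⟩
        · exact ⟨y₁, hy₁D₂⟩
      · intro i j hij
        fin_cases i <;> fin_cases j <;> simp_all <;>
          · rw [Set.disjoint_left]
            rintro a ⟨haD, haE⟩ ⟨_, haE'⟩
            first
            | exact absurd haE haE'
            | exact absurd haE' haE
      · ext y
        simp only [Set.mem_iUnion]
        rw [Fin.exists_fin_two]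
        constructor
        · rintro (⟨hy, _⟩ | ⟨hy, _⟩) <;> exact hy
        · intro hy
          by_cases hEy : E y₀ y
          · exact Or.inl ⟨hy, hEy⟩
          · exact Or.inr ⟨hy, hEy⟩
      · intro a b hab j ha
        fin_cases j
        · exact ⟨hab.2.1, ha.2.tail hab⟩
        · refine ⟨hab.2.1, fun hEb => ha.2 (hEb.tail (simY_symm' f h C D hab))⟩
      · intro j
        have h₁ : D₁ ⊆ D := fun y hy => hy.1
        have h₂ : D₂ ⊆ D := fun y hy => hy.1
        have hlt₁ : D₁.ncard < D.ncard :=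
          Set.ncard_lt_ncard (by
            rw [Set.ssubset_def]
            exact ⟨h₁, fun hsub => hE (hsub hy₁).2⟩) D.toFinite
        have hlt₂ : D₂.ncard < D.ncard :=
          Set.ncard_lt_ncard (by
            rw [Set.ssubset_def]
            exact ⟨h₂, fun hsub => (hsub hy₀).2 Relation.ReflTransGen.refl⟩) D.toFinite
        fin_cases j
        · exact ih C D₁ (by omega)
        · exact ih C D₂ (by omega)

/-- **Combinatorial lemma in the 'if' part of Theorem 1.** If the `𝒳 × 𝒴` matrix
`R = (f(x,y))` contains no forbidden submatrix, then `R` is decomposable. -/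
theorem decomposable_of_no_forbidden {𝒳 𝒴 𝒵 𝒢 ℋ : Type}
    [Fintype 𝒳] [DecidableEq 𝒳] [Fintype 𝒴] [DecidableEq 𝒴]
    [Fintype 𝒵] [DecidableEq 𝒵] [Fintype 𝒢] [DecidableEq 𝒢]
    [Fintype ℋ] [DecidableEq ℋ]
    (f : 𝒳 → 𝒴 → 𝒵) (g : 𝒳 → 𝒴 → 𝒢) (h : 𝒳 → 𝒴 → ℋ)
    (hforb : ∀ (C : Set 𝒳) (D : Set 𝒴), ¬ Forbidden f g h C D) :
    Decomposable f g h Set.univ Set.univ :=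
  decomposable_aux f g h hforb (Set.univ.ncard + Set.univ.ncard) _ _ le_rfl
end

section
/- (Bob-side entropy bound from Example 2.) Let M₂ be a finite-valued random variable that is conditionally independent of Xⁿ given Yⁿ. Then H(Y_{X̄}ⁿ | M₂, Xⁿ) = H(Y_Xⁿ | M₂, Xⁿ), and consequently H(Yⁿ | M₂) ≤ 2·H(Y_Xⁿ | M₂, Xⁿ). -/
open scoped BigOperators

/-- `Y_Xⁿ`: the vector whose `i`-th entry is `Y₀ᵢ` if `Xᵢ = 0` and `Y₁ᵢ` if `Xᵢ = 1`. -/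
def selSame {Ω : Type*} {n : ℕ} (Xv : Ω → Fin n → Bool)
    (Yv : Ω → Fin n → Bool × Bool) : Ω → Fin n → Bool :=
  fun ω i => if Xv ω i then (Yv ω i).2 else (Yv ω i).1

/-- `Y_{X̄}ⁿ`: the vector whose `i`-th entry is `Y_{1−Xᵢ, i}`. -/
def selOpp {Ω : Type*} {n : ℕ} (Xv : Ω → Fin n → Bool)
    (Yv : Ω → Fin n → Bool × Bool) : Ω → Fin n → Bool :=
  fun ω i => if Xv ω i then (Yv ω i).1 else (Yv ω i).2

/-- The inputs `(Xⁿ, Yⁿ) = (Xⁿ, (Y₀ⁿ, Y₁ⁿ))` are `n` i.i.d. copies of three mutually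
independent uniform bits, i.e. the joint distribution is uniform on the `8^n` values. -/
def UnifIID {Ω : Type*} [Fintype Ω] {n : ℕ} (p : Ω → ℝ)
    (Xv : Ω → Fin n → Bool) (Yv : Ω → Fin n → Bool × Bool) : Prop :=
  ∀ (xv : Fin n → Bool) (yv : Fin n → Bool × Bool),
    probOf p (fun ω => Xv ω = xv ∧ Yv ω = yv) = (1 / 8 : ℝ) ^ n


section Helpers

open Finset Real

/-- Gibbs' inequality, unnormalized form. -/
lemma gibbs_le {τ : Type*} [Fintype τ] (f g : τ → ℝ)
    (hf : ∀ t, 0 ≤ f t) (hg : ∀ t, 0 ≤ g t)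
    (hfg : ∀ t, 0 < f t → 0 < g t) :
    ∑ t, (f t * Real.log (g t) - f t * Real.log (f t)) ≤ ∑ t, g t - ∑ t, f t := by
  rw [← Finset.sum_sub_distrib]
  apply Finset.sum_le_sum
  intro t _
  rcases eq_or_lt_of_le (hf t) with h0 | h0
  · simp [← h0, hg t]
  · have hgt := hfg t h0
    have : Real.log (g t) - Real.log (f t) = Real.log (g t / f t) := by
      rw [Real.log_div (ne_of_gt hgt) (ne_of_gt h0)]
    calc f t * Real.log (g t) - f t * Real.log (f t)
        = f t * Real.log (g t / f t) := by rw [← mul_sub, this]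
      _ ≤ f t * (g t / f t - 1) := by
          apply mul_le_mul_of_nonneg_left _ (le_of_lt h0)
          exact Real.log_le_sub_one_of_pos (div_pos hgt h0)
      _ = g t - f t := by field_simp

/-- Equality case of Gibbs' inequality. -/
lemma gibbs_eq {τ : Type*} [Fintype τ] (f g : τ → ℝ)
    (hf : ∀ t, 0 ≤ f t) (hg : ∀ t, 0 ≤ g t)
    (hfg : ∀ t, 0 < f t → 0 < g t)
    (heq : ∑ t, (f t * Real.log (g t) - f t * Real.log (f t)) = ∑ t, g t - ∑ t, f t) :
    ∀ t, f t = g t := by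
  have hterm : ∀ t ∈ Finset.univ, f t * Real.log (g t) - f t * Real.log (f t) ≤ g t - f t := by
    intro t _
    rcases eq_or_lt_of_le (hf t) with h0 | h0
    · simp [← h0, hg t]
    · have hgt := hfg t h0
      calc f t * Real.log (g t) - f t * Real.log (f t)
          = f t * Real.log (g t / f t) := by
            rw [← mul_sub, Real.log_div (ne_of_gt hgt) (ne_of_gt h0)]
        _ ≤ f t * (g t / f t - 1) := by
            apply mul_le_mul_of_nonneg_left _ (le_of_lt h0)
            exact Real.log_le_sub_one_of_pos (div_pos hgt h0)
        _ = g t - f t := by field_simp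
  rw [← Finset.sum_sub_distrib] at heq
  have := (Finset.sum_eq_sum_iff_of_le hterm).1 heq
  intro t
  have ht := this t (Finset.mem_univ t)
  rcases eq_or_lt_of_le (hf t) with h0 | h0
  · -- f t = 0, so LHS = 0, hence g t = f t
    rw [← h0] at ht ⊢
    simp at ht
    linarith
  · have hgt := hfg t h0
    by_contra hne
    have hd : g t / f t ≠ 1 := by
      intro h
      exact hne ((div_eq_one_iff_eq (ne_of_gt h0)).1 h).symm
    have hlt : Real.log (g t / f t) < g t / f t - 1 :=
      Real.log_lt_sub_one_of_pos (div_pos hgt h0) hd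
    have : f t * Real.log (g t / f t) < f t * (g t / f t - 1) :=
      (mul_lt_mul_iff_right₀ h0).2 hlt
    rw [← mul_sub, ← Real.log_div (ne_of_gt hgt) (ne_of_gt h0)] at ht
    have he : f t * (g t / f t - 1) = g t - f t := by field_simp
    linarith

end Helpers

section Helpers2

open Finset Real

variable {Ω τ β : Type*} [Fintype Ω] [Fintype τ] [Fintype β]

set_option linter.unusedSectionVars false in
lemma distOf_nonneg [DecidableEq β] (p : Ω → ℝ) (hp : ∀ ω, 0 ≤ p ω) (A : Ω → β) :
    ∀ b, 0 ≤ distOf p A b := by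
  intro b
  apply Finset.sum_nonneg
  intro ω _
  split <;> simp [hp ω]

lemma sum_distOf [DecidableEq β] (p : Ω → ℝ) (A : Ω → β) :
    ∑ b, distOf p A b = ∑ ω, p ω := by
  unfold distOf
  rw [Finset.sum_comm]
  apply Finset.sum_congr rfl
  intro ω _
  simp

set_option linter.unusedSectionVars false in
lemma distOf_comp [DecidableEq τ] [DecidableEq β] (p : Ω → ℝ) (T : Ω → τ) (g : τ → β) :
    distOf p (fun ω => g (T ω)) = distOf (distOf p T) g := by
  funext b
  unfold distOf
  have h1 : ∀ t : τ, (if g t = b then (∑ ω, if T ω = t then p ω else 0) else 0)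
      = ∑ ω, if T ω = t then (if g t = b then p ω else 0) else 0 := by
    intro t; split
    · rfl
    · simp
  simp only [h1]
  rw [Finset.sum_comm]
  apply Finset.sum_congr rfl
  intro ω _
  rw [Finset.sum_eq_single (T ω)]
  · simp
  · intro t _ ht; simp [Ne.symm ht]
  · simp

lemma entRV_comp [DecidableEq τ] [DecidableEq β] (p : Ω → ℝ) (T : Ω → τ) (g : τ → β) :
    entRV p (fun ω => g (T ω)) = entRV (distOf p T) g := by
  unfold entRV
  rw [distOf_comp]

/-- Unnormalized subadditivity of entropy. -/
lemma entD_subadd {α β : Type*} [Fintype α] [Fintype β] (j : α × β → ℝ)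
    (hj : ∀ t, 0 ≤ j t) :
    entD j - (∑ t, j t) * Real.log (∑ t, j t) ≤
      entD (fun a => ∑ b, j (a, b)) + entD (fun b => ∑ a, j (a, b)) := by
  set w := ∑ t, j t with hw
  set s := fun a => ∑ b, j (a, b) with hs
  set o := fun b => ∑ a, j (a, b) with ho
  have hsnn : ∀ a, 0 ≤ s a := fun a => Finset.sum_nonneg fun b _ => hj _
  have honn : ∀ b, 0 ≤ o b := fun b => Finset.sum_nonneg fun a _ => hj _
  have hwnn : 0 ≤ w := Finset.sum_nonneg fun t _ => hj t
  have hsum_s : ∑ a, s a = w := by rw [hw, Fintype.sum_prod_type]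
  have hsum_o : ∑ b, o b = w := by rw [hw, Fintype.sum_prod_type_right]
  rcases eq_or_lt_of_le hwnn with hw0 | hw0
  · have hall : ∀ t, j t = 0 := fun t =>
      (Finset.sum_eq_zero_iff_of_nonneg (fun t _ => hj t)).1 hw0.symm t (Finset.mem_univ t)
    have e1 : entD j = 0 := by simp [entD, hall]
    have e2 : entD s = 0 := by simp [entD, hs, hall]
    have e3 : entD o = 0 := by simp [entD, ho, hall]
    rw [e1, e2, e3, ← hw0]
    simp
  · have key := gibbs_le j (fun t => s t.1 * o t.2 / w) hj
      (fun t => div_nonneg (mul_nonneg (hsnn _) (honn _)) hwnn)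
      (fun t h0 => by
        have hs1 : 0 < s t.1 := lt_of_lt_of_le h0
          (Finset.single_le_sum (fun b _ => hj (t.1, b)) (Finset.mem_univ t.2))
        have ho1 : 0 < o t.2 := lt_of_lt_of_le h0
          (Finset.single_le_sum (fun a _ => hj (a, t.2)) (Finset.mem_univ t.1))
        exact div_pos (mul_pos hs1 ho1) hw0)
    have hg_sum : ∑ t : α × β, s t.1 * o t.2 / w = w := by
      rw [Fintype.sum_prod_type]
      have h1 : ∀ a, ∑ b, s a * o b / w = s a := by
        intro a
        rw [← Finset.sum_div, ← Finset.mul_sum, hsum_o]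
        field_simp
      simp only [h1, hsum_s]
    have hlog : ∀ t : α × β, j t * Real.log (s t.1 * o t.2 / w) - j t * Real.log (j t)
        = j t * Real.log (s t.1) + j t * Real.log (o t.2) - j t * Real.log w
          - j t * Real.log (j t) := by
      intro t
      rcases eq_or_lt_of_le (hj t) with h0 | h0
      · rw [← h0]; ring
      · have hs1 : 0 < s t.1 := lt_of_lt_of_le h0
          (Finset.single_le_sum (fun b _ => hj (t.1, b)) (Finset.mem_univ t.2))
        have ho1 : 0 < o t.2 := lt_of_lt_of_le h0
          (Finset.single_le_sum (fun a _ => hj (a, t.2)) (Finset.mem_univ t.1))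
        rw [Real.log_div (by positivity) (ne_of_gt hw0),
          Real.log_mul (ne_of_gt hs1) (ne_of_gt ho1)]
        ring
    have h_s : ∑ t : α × β, j t * Real.log (s t.1) = ∑ a, s a * Real.log (s a) := by
      rw [Fintype.sum_prod_type]
      refine Finset.sum_congr rfl fun a _ => ?_
      show (∑ y : β, j (a, y) * Real.log (s a)) = s a * Real.log (s a)
      rw [← Finset.sum_mul]
    have h_o : ∑ t : α × β, j t * Real.log (o t.2) = ∑ b, o b * Real.log (o b) := by
      rw [Fintype.sum_prod_type_right]
      refine Finset.sum_congr rfl fun b _ => ?_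
      show (∑ x : α, j (x, b) * Real.log (o b)) = o b * Real.log (o b)
      rw [← Finset.sum_mul]
    have h_w : ∑ t : α × β, j t * Real.log w = w * Real.log w := by
      rw [← Finset.sum_mul]
    have expand : ∑ t : α × β, (j t * Real.log (s t.1 * o t.2 / w) - j t * Real.log (j t))
        = (∑ a, s a * Real.log (s a)) + (∑ b, o b * Real.log (o b)) - w * Real.log w
          - (∑ t : α × β, j t * Real.log (j t)) := by
      rw [Finset.sum_congr rfl (fun t _ => hlog t)]
      rw [Finset.sum_sub_distrib, Finset.sum_sub_distrib, Finset.sum_add_distrib,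
        h_s, h_o, h_w]
    rw [expand, hg_sum, hw] at key
    unfold entD
    linarith

end Helpers2


section Helpers3

open Finset Real

/-- entD is invariant under reindexing by an equivalence. -/
lemma entD_reindex {γ δ : Type*} [Fintype γ] [Fintype δ] (e : γ ≃ δ) (f : δ → ℝ) :
    entD (fun c => f (e c)) = entD f := by
  unfold entD
  rw [Equiv.sum_comp e (fun d => f d * Real.log (f d))]

lemma entD_const {γ : Type*} [Fintype γ] (c : ℝ) :
    entD (fun _ : γ => c) = -(Fintype.card γ * (c * Real.log c)) := by
  simp [entD, Finset.sum_const, Finset.card_univ]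

lemma entD_scale {τ : Type*} [Fintype τ] (c : ℝ) (hc : 0 < c) (f : τ → ℝ) :
    entD (fun t => c * f t) = c * entD f - c * (∑ t, f t) * Real.log c := by
  unfold entD
  have h : ∀ t, c * f t * Real.log (c * f t)
      = c * (f t * Real.log (f t)) + c * f t * Real.log c := by
    intro t
    rcases eq_or_ne (f t) 0 with h0 | h0
    · simp [h0]
    · rw [Real.log_mul (ne_of_gt hc) h0]; ring
  simp only [h]
  rw [Finset.sum_add_distrib, ← Finset.mul_sum]
  have h2 : ∑ t, c * f t * Real.log c = c * (∑ t, f t) * Real.log c := by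
    rw [← Finset.sum_mul, ← Finset.mul_sum]
  rw [h2]
  ring

lemma entD_block {γ δ : Type*} [Fintype γ] [Fintype δ] (f : γ → δ → ℝ) :
    entD (fun pr : γ × δ => f pr.1 pr.2) = ∑ c, entD (f c) := by
  unfold entD
  rw [Fintype.sum_prod_type, ← Finset.sum_neg_distrib]

lemma entD_fst {γ δ : Type*} [Fintype γ] [Fintype δ] (f : γ → ℝ) :
    entD (fun pr : γ × δ => f pr.1) = (Fintype.card δ : ℝ) * entD f := by
  rw [show (fun pr : γ × δ => f pr.1) = (fun pr : γ × δ => (fun c (_ : δ) => f c) pr.1 pr.2) from rfl,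
    entD_block (f := fun c (_ : δ) => f c)]
  unfold entD
  simp [Finset.sum_const, Finset.card_univ, Finset.mul_sum]

/-- `selSame` as a pure function of `(x, y)`. -/
def slF {n : ℕ} (x : Fin n → Bool) (y : Fin n → Bool × Bool) : Fin n → Bool :=
  fun i => if x i then (y i).2 else (y i).1

/-- `selOpp` as a pure function of `(x, y)`. -/
def soF {n : ℕ} (x : Fin n → Bool) (y : Fin n → Bool × Bool) : Fin n → Bool :=
  fun i => if x i then (y i).1 else (y i).2

lemma soF_flip {n : ℕ} (x : Fin n → Bool) (y : Fin n → Bool × Bool) :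
    soF x y = slF (fun i => !x i) y := by
  funext i
  cases h : x i <;> simp [slF, soF, h]

/-- For fixed `x`, `y ↦ (y_x, y_{x̄})` is an equivalence. -/
def yEquiv {n : ℕ} (x : Fin n → Bool) :
    (Fin n → Bool × Bool) ≃ (Fin n → Bool) × (Fin n → Bool) where
  toFun y := (slF x y, soF x y)
  invFun ab := fun i => if x i then (ab.2 i, ab.1 i) else (ab.1 i, ab.2 i)
  left_inv y := by
    funext i
    cases h : x i <;> simp [slF, soF, h]
  right_inv ab := by
    obtain ⟨a, b⟩ := ab
    refine Prod.ext ?_ ?_ <;> funext i <;> cases h : x i <;> simp [slF, soF, h]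

end Helpers3


section Helpers4

open Finset Real

set_option linter.unusedSectionVars false

variable {M : Type*} [Fintype M] {n : ℕ}

/-- Conditional (unnormalized) distribution of `Y_X` given `(m, x)`. -/
noncomputable def sD (q : M → (Fin n → Bool × Bool) → ℝ) (m : M) (x : Fin n → Bool) :
    (Fin n → Bool) → ℝ :=
  fun a => ∑ y, if slF x y = a then q m y else 0

/-- Conditional (unnormalized) distribution of `Y_X̄` given `(m, x)`. -/
noncomputable def oD (q : M → (Fin n → Bool × Bool) → ℝ) (m : M) (x : Fin n → Bool) :
    (Fin n → Bool) → ℝ :=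
  fun b => ∑ y, if soF x y = b then q m y else 0

lemma oD_flip (q : M → (Fin n → Bool × Bool) → ℝ) (m : M) (x : Fin n → Bool) :
    oD q m x = sD q m (fun i => !x i) := by
  funext b
  unfold oD sD
  apply Finset.sum_congr rfl
  intro y _
  rw [soF_flip]

lemma sD_eq (q : M → (Fin n → Bool × Bool) → ℝ) (m : M) (x : Fin n → Bool)
    (a : Fin n → Bool) :
    sD q m x a = ∑ b, q m ((yEquiv x).symm (a, b)) := by
  unfold sD
  rw [← Equiv.sum_comp (yEquiv x).symm
    (fun y => if slF x y = a then q m y else 0)]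
  have h : ∀ ab : (Fin n → Bool) × (Fin n → Bool),
      (if slF x ((yEquiv x).symm ab) = a then q m ((yEquiv x).symm ab) else 0)
        = (if ab.1 = a then q m ((yEquiv x).symm ab) else 0) := by
    intro ab
    have : slF x ((yEquiv x).symm ab) = ab.1 := by
      have := (yEquiv x).apply_symm_apply ab
      exact congrArg Prod.fst this
    rw [this]
  rw [Finset.sum_congr rfl (fun ab _ => h ab), Fintype.sum_prod_type]
  rw [Finset.sum_eq_single a]
  · simp
  · intro a' _ ha'
    rw [Finset.sum_eq_zero]
    intro b _
    rw [if_neg ha']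
  · simp

lemma oD_eq (q : M → (Fin n → Bool × Bool) → ℝ) (m : M) (x : Fin n → Bool)
    (b : Fin n → Bool) :
    oD q m x b = ∑ a, q m ((yEquiv x).symm (a, b)) := by
  unfold oD
  rw [← Equiv.sum_comp (yEquiv x).symm
    (fun y => if soF x y = b then q m y else 0)]
  have h : ∀ ab : (Fin n → Bool) × (Fin n → Bool),
      (if soF x ((yEquiv x).symm ab) = b then q m ((yEquiv x).symm ab) else 0)
        = (if ab.2 = b then q m ((yEquiv x).symm ab) else 0) := by
    intro ab
    have : soF x ((yEquiv x).symm ab) = ab.2 := by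
      have := (yEquiv x).apply_symm_apply ab
      exact congrArg Prod.snd this
    rw [this]
  rw [Finset.sum_congr rfl (fun ab _ => h ab), Fintype.sum_prod_type_right]
  rw [Finset.sum_eq_single b]
  · simp
  · intro b' _ hb'
    rw [Finset.sum_eq_zero]
    intro a _
    rw [if_neg hb']
  · simp

lemma sum_sD (q : M → (Fin n → Bool × Bool) → ℝ) (m : M) (x : Fin n → Bool) :
    ∑ a, sD q m x a = ∑ y, q m y := by
  simp only [sD_eq]
  rw [← Fintype.sum_prod_type (f := fun ab : (Fin n → Bool) × (Fin n → Bool) =>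
    q m ((yEquiv x).symm ab)), Equiv.sum_comp (yEquiv x).symm (fun y => q m y)]

/-- The key per-`(m,x)` inequality: unnormalized subadditivity transported along `yEquiv`. -/
lemma key_ineq (q : M → (Fin n → Bool × Bool) → ℝ) (hq0 : ∀ m y, 0 ≤ q m y)
    (m : M) (x : Fin n → Bool) :
    entD (fun y => q m y) - (∑ y, q m y) * Real.log (∑ y, q m y) ≤
      entD (sD q m x) + entD (oD q m x) := by
  have h := entD_subadd (fun ab : (Fin n → Bool) × (Fin n → Bool) =>
      q m ((yEquiv x).symm ab)) (fun t => hq0 m _)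
  have e1 : entD (fun ab : (Fin n → Bool) × (Fin n → Bool) => q m ((yEquiv x).symm ab))
      = entD (fun y => q m y) := entD_reindex (yEquiv x).symm (fun y => q m y)
  have e2 : (∑ ab : (Fin n → Bool) × (Fin n → Bool), q m ((yEquiv x).symm ab))
      = ∑ y, q m y := Equiv.sum_comp (yEquiv x).symm (fun y => q m y)
  have e3 : (fun a => ∑ b, q m ((yEquiv x).symm (a, b))) = sD q m x := by
    funext a; rw [sD_eq]
  have e4 : (fun b => ∑ a, q m ((yEquiv x).symm (a, b))) = oD q m x := by
    funext b; rw [oD_eq]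
  rw [e1, e2, e3, e4] at h
  exact h

lemma sum_entD_oD (q : M → (Fin n → Bool × Bool) → ℝ) (m : M) :
    ∑ x : Fin n → Bool, entD (oD q m x) = ∑ x : Fin n → Bool, entD (sD q m x) := by
  have hinv : Function.Involutive (fun x : Fin n → Bool => fun i => !x i) := by
    intro x; funext i; simp
  calc ∑ x : Fin n → Bool, entD (oD q m x)
      = ∑ x : Fin n → Bool, entD (sD q m (fun i => !x i)) := by
        apply Finset.sum_congr rfl; intro x _; rw [oD_flip]
    _ = ∑ x : Fin n → Bool, entD (sD q m x) :=
        Equiv.sum_comp hinv.toPerm (fun x => entD (sD q m x))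

end Helpers4


section Helpers5

set_option linter.unusedSectionVars false

open Finset Real

lemma sum_triple {M X Y : Type*} [Fintype M] [Fintype X] [Fintype Y] (f : M × X × Y → ℝ) :
    ∑ t, f t = ∑ m, ∑ x, ∑ y, f (m, x, y) := by
  rw [Fintype.sum_prod_type]
  exact Finset.sum_congr rfl fun m _ => Fintype.sum_prod_type (f := fun xy => f (m, xy))

lemma sum_fiber {τ γ β : Type*} [Fintype τ] [Fintype γ] [DecidableEq β]
    (r : τ → ℝ) (g : τ → β) (b : β) (e : γ → τ)
    (hinj : Function.Injective e) (hcov : ∀ t, g t = b → ∃ c, e c = t) :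
    (∑ t, if g t = b then r t else 0) = ∑ c, if g (e c) = b then r (e c) else 0 := by
  classical
  have himg : ∑ t ∈ Finset.univ.image e, (if g t = b then r t else 0)
      = ∑ c, if g (e c) = b then r (e c) else 0 :=
    Finset.sum_image (fun c _ c' _ h => hinj h)
  rw [← himg]
  refine (Finset.sum_subset (Finset.subset_univ _) ?_).symm
  intro t _ ht
  rw [if_neg]
  intro hgt
  obtain ⟨c, hc⟩ := hcov t hgt
  exact ht (Finset.mem_image.2 ⟨c, Finset.mem_univ c, hc⟩)

variable {M X Y : Type*} [Fintype M] [Fintype X] [Fintype Y]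
  [DecidableEq M] [DecidableEq X] [DecidableEq Y]

lemma dist_pair12 (r : M × X × Y → ℝ) (m : M) (x : X) :
    distOf r (fun t => (t.1, t.2.1)) (m, x) = ∑ y, r (m, x, y) := by
  rw [show distOf r (fun t => (t.1, t.2.1)) (m, x)
      = ∑ t, if (t.1, t.2.1) = (m, x) then r t else 0 from rfl]
  rw [sum_fiber r _ _ (fun y : Y => (m, x, y))
    (fun y₁ y₂ h => by simpa using h)
    (fun t ht => ⟨t.2.2, by
      obtain ⟨m', x', y'⟩ := t
      simp only [Prod.mk.injEq] at ht
      obtain ⟨h1, h2⟩ := ht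
      subst h1; subst h2; rfl⟩)]
  exact Finset.sum_congr rfl fun y _ => if_pos rfl

lemma dist_pair13 (r : M × X × Y → ℝ) (m : M) (y : Y) :
    distOf r (fun t => (t.1, t.2.2)) (m, y) = ∑ x, r (m, x, y) := by
  rw [show distOf r (fun t => (t.1, t.2.2)) (m, y)
      = ∑ t, if (t.1, t.2.2) = (m, y) then r t else 0 from rfl]
  rw [sum_fiber r _ _ (fun x : X => (m, x, y))
    (fun x₁ x₂ h => by simpa using h)
    (fun t ht => ⟨t.2.1, by
      obtain ⟨m', x', y'⟩ := t
      simp only [Prod.mk.injEq] at ht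
      obtain ⟨h1, h2⟩ := ht
      subst h1; subst h2; rfl⟩)]
  exact Finset.sum_congr rfl fun x _ => if_pos rfl

lemma dist_pair31 (r : M × X × Y → ℝ) (y : Y) (m : M) :
    distOf r (fun t => (t.2.2, t.1)) (y, m) = ∑ x, r (m, x, y) := by
  rw [show distOf r (fun t => (t.2.2, t.1)) (y, m)
      = ∑ t, if (t.2.2, t.1) = (y, m) then r t else 0 from rfl]
  rw [sum_fiber r _ _ (fun x : X => (m, x, y))
    (fun x₁ x₂ h => by simpa using h)
    (fun t ht => ⟨t.2.1, by
      obtain ⟨m', x', y'⟩ := t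
      simp only [Prod.mk.injEq] at ht
      obtain ⟨h1, h2⟩ := ht
      subst h1; subst h2; rfl⟩)]
  exact Finset.sum_congr rfl fun x _ => if_pos rfl

lemma dist_pair23 (r : M × X × Y → ℝ) (x : X) (y : Y) :
    distOf r (fun t => (t.2.1, t.2.2)) (x, y) = ∑ m, r (m, x, y) := by
  rw [show distOf r (fun t => (t.2.1, t.2.2)) (x, y)
      = ∑ t, if (t.2.1, t.2.2) = (x, y) then r t else 0 from rfl]
  rw [sum_fiber r _ _ (fun m' : M => (m', x, y))
    (fun m₁ m₂ h => by simpa using h)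
    (fun t ht => ⟨t.1, by
      obtain ⟨m', x', y'⟩ := t
      simp only [Prod.mk.injEq] at ht
      obtain ⟨h1, h2⟩ := ht
      subst h1; subst h2; rfl⟩)]
  exact Finset.sum_congr rfl fun m' _ => if_pos rfl

lemma dist_fst (r : M × X × Y → ℝ) (m : M) :
    distOf r (fun t => t.1) m = ∑ x, ∑ y, r (m, x, y) := by
  rw [show distOf r (fun t => t.1) m = ∑ t, if t.1 = m then r t else 0 from rfl]
  rw [sum_fiber r (fun t => t.1) m (fun c : X × Y => (m, c.1, c.2))
    (fun c₁ c₂ h => by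
      obtain ⟨x₁, y₁⟩ := c₁; obtain ⟨x₂, y₂⟩ := c₂
      simpa using h)
    (fun t ht => ⟨(t.2.1, t.2.2), by
      obtain ⟨m', x', y'⟩ := t
      simp only at ht
      subst ht; rfl⟩)]
  rw [Fintype.sum_prod_type]
  exact Finset.sum_congr rfl fun x _ => Finset.sum_congr rfl fun y _ => if_pos rfl

lemma dist_thd (r : M × X × Y → ℝ) (y : Y) :
    distOf r (fun t => t.2.2) y = ∑ m, ∑ x, r (m, x, y) := by
  rw [show distOf r (fun t => t.2.2) y = ∑ t, if t.2.2 = y then r t else 0 from rfl]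
  rw [sum_fiber r (fun t => t.2.2) y (fun c : M × X => (c.1, c.2, y))
    (fun c₁ c₂ h => by
      obtain ⟨m₁, x₁⟩ := c₁; obtain ⟨m₂, x₂⟩ := c₂
      simpa using h)
    (fun t ht => ⟨(t.1, t.2.1), by
      obtain ⟨m', x', y'⟩ := t
      simp only at ht
      subst ht; rfl⟩)]
  rw [Fintype.sum_prod_type]
  exact Finset.sum_congr rfl fun m' _ => Finset.sum_congr rfl fun x _ => if_pos rfl

lemma dist_id (r : M × X × Y → ℝ) (t₀ : M × X × Y) :
    distOf r (fun t => (t.1, t.2.1, t.2.2)) t₀ = r t₀ := by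
  rw [show distOf r (fun t => (t.1, t.2.1, t.2.2)) t₀
      = ∑ t, if t = t₀ then r t else 0 from rfl]
  rw [Finset.sum_ite_eq' Finset.univ t₀ r]
  simp

lemma dist_sel {A : Type*} [Fintype A] [DecidableEq A]
    (g : X → Y → A) (r : M × X × Y → ℝ) (a : A) (m : M) (x : X) :
    distOf r (fun t => (g t.2.1 t.2.2, (t.1, t.2.1))) (a, (m, x))
      = ∑ y, if g x y = a then r (m, x, y) else 0 := by
  rw [show distOf r (fun t => (g t.2.1 t.2.2, (t.1, t.2.1))) (a, (m, x))
      = ∑ t, if (g t.2.1 t.2.2, (t.1, t.2.1)) = (a, (m, x)) then r t else 0 from rfl]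
  rw [sum_fiber r _ _ (fun y : Y => (m, x, y))
    (fun y₁ y₂ h => by simpa using h)
    (fun t ht => ⟨t.2.2, by
      obtain ⟨m', x', y'⟩ := t
      simp only [Prod.mk.injEq] at ht
      obtain ⟨_, h1, h2⟩ := ht
      subst h1; subst h2; rfl⟩)]
  apply Finset.sum_congr rfl
  intro y _
  by_cases h : g x y = a
  · rw [if_pos (by rw [h]), if_pos h]
  · rw [if_neg, if_neg h]
    intro hc
    exact h (congrArg Prod.fst hc)

end Helpers5

/-- **Bob-side entropy bound from Example 2.** If `M₂` is conditionally independent of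
`Xⁿ` given `Yⁿ`, then `H(Y_{X̄}ⁿ | M₂, Xⁿ) = H(Y_Xⁿ | M₂, Xⁿ)` and consequently
`H(Yⁿ | M₂) ≤ 2 · H(Y_Xⁿ | M₂, Xⁿ)`. -/
theorem bob_side_entropy_bound {Ω 𝓜₂ : Type}
    [Fintype Ω] [Fintype 𝓜₂] [DecidableEq 𝓜₂]
    (n : ℕ) (p : Ω → ℝ) (hp : IsPMF p)
    (Xv : Ω → Fin n → Bool) (Yv : Ω → Fin n → Bool × Bool)
    (hiid : UnifIID p Xv Yv)
    (M₂ : Ω → 𝓜₂)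
    (hci : condMutInfo p M₂ Xv Yv = 0) :
    condEnt p (selOpp Xv Yv) (fun ω => (M₂ ω, Xv ω)) =
      condEnt p (selSame Xv Yv) (fun ω => (M₂ ω, Xv ω)) ∧
    condEnt p Yv M₂ ≤ 2 * condEnt p (selSame Xv Yv) (fun ω => (M₂ ω, Xv ω)) := by
  -- abbreviations
  set k : ℝ := (1/2 : ℝ) ^ n with hk_def
  have hk : 0 < k := by positivity
  set c : ℝ := (2 : ℝ) ^ n with hc_def
  have hck : c * k = 1 := by
    rw [hk_def, hc_def, div_pow, one_pow, mul_one_div, div_self (by positivity)]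
  have hc0 : 0 < c := by positivity
  set T : Ω → 𝓜₂ × (Fin n → Bool) × (Fin n → Bool × Bool) :=
    fun ω => (M₂ ω, Xv ω, Yv ω) with hT
  set r := distOf p T with hr_def
  have hr0 : ∀ t, 0 ≤ r t := distOf_nonneg p hp.1 T
  have hr1 : ∑ t, r t = 1 := by rw [hr_def, sum_distOf, hp.2]
  set q : 𝓜₂ → (Fin n → Bool × Bool) → ℝ := fun m y => ∑ x, r (m, x, y) with hq_def
  set qM : 𝓜₂ → ℝ := fun m => ∑ y, q m y with hqM_def
  have hq0 : ∀ m y, 0 ≤ q m y := fun m y => Finset.sum_nonneg fun x _ => hr0 _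
  have hqM0 : ∀ m, 0 ≤ qM m := fun m => Finset.sum_nonneg fun y _ => hq0 m y
  have hcard_X : ((Fintype.card (Fin n → Bool) : ℕ) : ℝ) = c := by
    rw [Fintype.card_fun]
    simp [hc_def]
  have hqM1 : ∑ m, qM m = 1 := by
    rw [← hr1, sum_triple r]
    exact Finset.sum_congr rfl fun m _ => Finset.sum_comm
  have hq_le : ∀ m x y, r (m, x, y) ≤ q m y := fun m x y =>
    Finset.single_le_sum (f := fun x' => r (m, x', y)) (fun x' _ => hr0 _)
      (Finset.mem_univ x)
  -- the (Xⁿ,Yⁿ)-marginal is uniform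
  have F1 : ∀ (x : Fin n → Bool) (y : Fin n → Bool × Bool),
      (∑ m, r (m, x, y)) = k * k * k := by
    intro x y
    have h8 : ((1:ℝ)/8) ^ n = k * k * k := by
      rw [hk_def, show (1/8 : ℝ) = (1/2) * ((1/2) * (1/2)) by norm_num, mul_pow, mul_pow]
      ring
    rw [← h8, ← hiid x y, hr_def]
    unfold probOf distOf
    rw [Finset.sum_comm]
    apply Finset.sum_congr rfl
    intro ω _
    by_cases h : Xv ω = x ∧ Yv ω = y
    · have hTω : T ω = (M₂ ω, x, y) := by
        rw [show T ω = (M₂ ω, Xv ω, Yv ω) from rfl, h.1, h.2]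
      rw [Finset.sum_eq_single (M₂ ω)]
      · rw [if_pos hTω, if_pos h]
      · intro m _ hm
        rw [if_neg]
        intro hc
        exact hm (congrArg Prod.fst hc).symm
      · intro hmem; exact absurd (Finset.mem_univ _) hmem
    · rw [if_neg h, Finset.sum_eq_zero]
      intro m _
      rw [if_neg]
      intro hc
      exact h ⟨congrArg (fun t => t.2.1) hc, congrArg (fun t => t.2.2) hc⟩
  -- bridging lemmas: entRV under p = entD of pushforwards of r
  have eMY : entRV p (fun ω => (M₂ ω, Yv ω))
      = entD (distOf r (fun t => (t.1, t.2.2))) := by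
    rw [hr_def]; exact entRV_comp p T (fun t => (t.1, t.2.2))
  have eXY : entRV p (fun ω => (Xv ω, Yv ω))
      = entD (distOf r (fun t => (t.2.1, t.2.2))) := by
    rw [hr_def]; exact entRV_comp p T (fun t => (t.2.1, t.2.2))
  have eId : entRV p (fun ω => (M₂ ω, Xv ω, Yv ω))
      = entD (distOf r (fun t => (t.1, t.2.1, t.2.2))) := by
    rw [hr_def]; exact entRV_comp p T (fun t => (t.1, t.2.1, t.2.2))
  have eY : entRV p Yv = entD (distOf r (fun t => t.2.2)) := by
    rw [hr_def]; exact entRV_comp p T (fun t => t.2.2)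
  have eMX : entRV p (fun ω => (M₂ ω, Xv ω))
      = entD (distOf r (fun t => (t.1, t.2.1))) := by
    rw [hr_def]; exact entRV_comp p T (fun t => (t.1, t.2.1))
  have eM : entRV p M₂ = entD (distOf r (fun t => t.1)) := by
    rw [hr_def]; exact entRV_comp p T (fun t => t.1)
  have eYM : entRV p (fun ω => (Yv ω, M₂ ω))
      = entD (distOf r (fun t => (t.2.2, t.1))) := by
    rw [hr_def]; exact entRV_comp p T (fun t => (t.2.2, t.1))
  have eB : entRV p (fun ω => (selSame Xv Yv ω, (M₂ ω, Xv ω)))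
      = entD (distOf r (fun t => (slF t.2.1 t.2.2, (t.1, t.2.1)))) := by
    rw [hr_def]; exact entRV_comp p T (fun t => (slF t.2.1 t.2.2, (t.1, t.2.1)))
  have eA : entRV p (fun ω => (selOpp Xv Yv ω, (M₂ ω, Xv ω)))
      = entD (distOf r (fun t => (soF t.2.1 t.2.2, (t.1, t.2.1)))) := by
    rw [hr_def]; exact entRV_comp p T (fun t => (soF t.2.1 t.2.2, (t.1, t.2.1)))
  -- distribution computations (before factorization)
  have dMY : distOf r (fun t => (t.1, t.2.2))
      = fun b : 𝓜₂ × (Fin n → Bool × Bool) => q b.1 b.2 := by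
    funext b
    obtain ⟨m, y⟩ := b
    rw [dist_pair13]
  have dYM : distOf r (fun t => (t.2.2, t.1))
      = fun b : (Fin n → Bool × Bool) × 𝓜₂ => q b.2 b.1 := by
    funext b
    obtain ⟨y, m⟩ := b
    rw [dist_pair31]
  have dXY : distOf r (fun t => (t.2.1, t.2.2))
      = fun _ : (Fin n → Bool) × (Fin n → Bool × Bool) => k * k * k := by
    funext b
    obtain ⟨x, y⟩ := b
    rw [dist_pair23, F1]
  have dY : distOf r (fun t => t.2.2)
      = fun _ : (Fin n → Bool × Bool) => k * k := by
    funext y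
    rw [dist_thd, Finset.sum_comm]
    rw [Finset.sum_congr rfl fun x _ => F1 x y, Finset.sum_const, Finset.card_univ,
      nsmul_eq_mul, hcard_X]
    calc c * (k * k * k) = (c * k) * (k * k) := by ring
      _ = k * k := by rw [hck]; ring
  have dId : distOf r (fun t => (t.1, t.2.1, t.2.2)) = r := by
    funext t₀
    rw [dist_id]
  have dM : distOf r (fun t => t.1) = fun m => qM m := by
    funext m
    rw [dist_fst]
    exact Finset.sum_comm
  -- entropy values (before factorization)
  have hcard_Y : ((Fintype.card (Fin n → Bool × Bool) : ℕ) : ℝ) = c * c := by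
    rw [Fintype.card_fun]
    push_cast
    rw [show (Fintype.card (Bool × Bool) : ℝ) = 2 * 2 from by
      rw [Fintype.card_prod, Fintype.card_bool]; norm_num, hc_def,
      Fintype.card_fin, mul_pow]
  have vMY : entD (distOf r (fun t => (t.1, t.2.2)))
      = ∑ m, entD (fun y => q m y) := by
    rw [dMY]
    exact entD_block q
  have vYM : entD (distOf r (fun t => (t.2.2, t.1)))
      = ∑ m, entD (fun y => q m y) := by
    rw [dYM]
    rw [show (fun b : (Fin n → Bool × Bool) × 𝓜₂ => q b.2 b.1)
        = fun b => (fun pr : 𝓜₂ × (Fin n → Bool × Bool) => q pr.1 pr.2)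
          ((Equiv.prodComm _ _) b) from rfl]
    rw [entD_reindex (Equiv.prodComm _ _) (fun pr : 𝓜₂ × (Fin n → Bool × Bool) => q pr.1 pr.2)]
    exact entD_block q
  have logkkk : Real.log (k * k * k) = 3 * Real.log k := by
    rw [Real.log_mul (by positivity) (ne_of_gt hk), Real.log_mul (ne_of_gt hk) (ne_of_gt hk)]
    ring
  have logkk : Real.log (k * k) = 2 * Real.log k := by
    rw [Real.log_mul (ne_of_gt hk) (ne_of_gt hk)]
    ring
  have vXY : entD (distOf r (fun t => (t.2.1, t.2.2))) = -(3 * Real.log k) := by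
    rw [dXY, entD_const]
    rw [Fintype.card_prod]
    push_cast
    rw [hcard_X, hcard_Y, logkkk]
    have : c * (c * c) * (k * k * k * (3 * Real.log k))
        = (c * k) * (c * k) * (c * k) * (3 * Real.log k) := by ring
    rw [this, hck]
    ring
  have vY : entD (distOf r (fun t => t.2.2)) = -(2 * Real.log k) := by
    rw [dY, entD_const, hcard_Y, logkk]
    have : c * c * (k * k * (2 * Real.log k)) = (c * k) * (c * k) * (2 * Real.log k) := by
      ring
    rw [this, hck]
    ring
  have vId : entD (distOf r (fun t => (t.1, t.2.1, t.2.2))) = entD r := by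
    rw [dId]
  -- use conditional independence to get the entropy identity
  have hstar : entD r = (∑ m, entD (fun y => q m y)) - Real.log k := by
    unfold condMutInfo at hci
    rw [eMY, eXY, eId, eY, vMY, vXY, vId, vY] at hci
    linarith
  -- factorization via equality in Gibbs' inequality
  have hsum_g : ∑ t : 𝓜₂ × (Fin n → Bool) × (Fin n → Bool × Bool),
      q t.1 t.2.2 * k = 1 := by
    have h1 : ∀ m, ∑ x : Fin n → Bool, ∑ y, q m y * k = c * (qM m * k) := by
      intro m
      have h2 : ∀ x : Fin n → Bool, (∑ y, q m y * k) = qM m * k := by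
        intro x
        rw [← Finset.sum_mul]
      rw [Finset.sum_congr rfl fun x _ => h2 x]
      rw [Finset.sum_const, Finset.card_univ, nsmul_eq_mul, hcard_X]
    calc ∑ t : 𝓜₂ × (Fin n → Bool) × (Fin n → Bool × Bool), q t.1 t.2.2 * k
        = ∑ m, ∑ x : Fin n → Bool, ∑ y, q m y * k :=
          sum_triple (fun t => q t.1 t.2.2 * k)
      _ = ∑ m, c * (qM m * k) := Finset.sum_congr rfl fun m _ => h1 m
      _ = c * ((∑ m, qM m) * k) := by rw [← Finset.mul_sum, ← Finset.sum_mul]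
      _ = 1 := by rw [hqM1, one_mul, hck]
  have hsplit : ∀ t : 𝓜₂ × (Fin n → Bool) × (Fin n → Bool × Bool),
      r t * Real.log (q t.1 t.2.2 * k) - r t * Real.log (r t)
      = (r t * Real.log (q t.1 t.2.2) + r t * Real.log k) - r t * Real.log (r t) := by
    intro t
    rcases eq_or_lt_of_le (hr0 t) with h0 | h0
    · rw [← h0]; ring
    · have hqt : 0 < q t.1 t.2.2 := lt_of_lt_of_le h0 (hq_le t.1 t.2.1 t.2.2)
      rw [Real.log_mul (ne_of_gt hqt) (ne_of_gt hk)]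
      ring
  have hrlogq : ∑ t : 𝓜₂ × (Fin n → Bool) × (Fin n → Bool × Bool),
      r t * Real.log (q t.1 t.2.2)
      = ∑ m, ∑ y, q m y * Real.log (q m y) := by
    calc ∑ t : 𝓜₂ × (Fin n → Bool) × (Fin n → Bool × Bool), r t * Real.log (q t.1 t.2.2)
        = ∑ m, ∑ x : Fin n → Bool, ∑ y, r (m, x, y) * Real.log (q m y) :=
          sum_triple (fun t => r t * Real.log (q t.1 t.2.2))
      _ = ∑ m, ∑ y, ∑ x : Fin n → Bool, r (m, x, y) * Real.log (q m y) :=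
          Finset.sum_congr rfl fun m _ => Finset.sum_comm
      _ = ∑ m, ∑ y, q m y * Real.log (q m y) := by
          apply Finset.sum_congr rfl
          intro m _
          apply Finset.sum_congr rfl
          intro y _
          rw [← Finset.sum_mul]
  have hgibbs_hyp : ∑ t : 𝓜₂ × (Fin n → Bool) × (Fin n → Bool × Bool),
      (r t * Real.log (q t.1 t.2.2 * k) - r t * Real.log (r t))
      = (∑ t : 𝓜₂ × (Fin n → Bool) × (Fin n → Bool × Bool), q t.1 t.2.2 * k)
        - ∑ t : 𝓜₂ × (Fin n → Bool) × (Fin n → Bool × Bool), r t := by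
    rw [hsum_g, hr1, sub_self]
    rw [Finset.sum_congr rfl fun t _ => hsplit t]
    rw [Finset.sum_sub_distrib, Finset.sum_add_distrib, hrlogq, ← Finset.sum_mul, hr1]
    have hSQ : ∑ m, ∑ y, q m y * Real.log (q m y) = -∑ m, entD (fun y => q m y) := by
      unfold entD
      rw [← Finset.sum_neg_distrib]
      simp
    have hER : ∑ t, r t * Real.log (r t) = -entD r := by
      unfold entD; ring
    rw [hSQ, hER, hstar]
    ring
  have hF3 : ∀ t : 𝓜₂ × (Fin n → Bool) × (Fin n → Bool × Bool),
      r t = q t.1 t.2.2 * k :=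
    gibbs_eq r (fun t => q t.1 t.2.2 * k) hr0
      (fun t => mul_nonneg (hq0 _ _) hk.le)
      (fun t h0 => mul_pos (lt_of_lt_of_le h0 (hq_le t.1 t.2.1 t.2.2)) hk)
      hgibbs_hyp
  -- distributions after factorization
  have dMX : distOf r (fun t => (t.1, t.2.1))
      = fun b : 𝓜₂ × (Fin n → Bool) => k * qM b.1 := by
    funext b
    obtain ⟨m, x⟩ := b
    rw [dist_pair12, Finset.sum_congr rfl fun y _ => hF3 (m, x, y), ← Finset.sum_mul]
    exact mul_comm _ _
  have dB : distOf r (fun t => (slF t.2.1 t.2.2, (t.1, t.2.1)))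
      = fun b : (Fin n → Bool) × (𝓜₂ × (Fin n → Bool)) =>
          k * sD q b.2.1 b.2.2 b.1 := by
    funext b
    obtain ⟨a, m, x⟩ := b
    rw [dist_sel slF r a m x,
      show sD q m x a = ∑ y, if slF x y = a then q m y else 0 from rfl, Finset.mul_sum]
    apply Finset.sum_congr rfl
    intro y _
    by_cases h : slF x y = a
    · rw [if_pos h, if_pos h, hF3 (m, x, y)]
      exact mul_comm _ _
    · rw [if_neg h, if_neg h, mul_zero]
  have dA : distOf r (fun t => (soF t.2.1 t.2.2, (t.1, t.2.1)))
      = fun b : (Fin n → Bool) × (𝓜₂ × (Fin n → Bool)) =>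
          k * oD q b.2.1 b.2.2 b.1 := by
    funext b
    obtain ⟨a, m, x⟩ := b
    rw [dist_sel soF r a m x,
      show oD q m x a = ∑ y, if soF x y = a then q m y else 0 from rfl, Finset.mul_sum]
    apply Finset.sum_congr rfl
    intro y _
    by_cases h : soF x y = a
    · rw [if_pos h, if_pos h, hF3 (m, x, y)]
      exact mul_comm _ _
    · rw [if_neg h, if_neg h, mul_zero]
  -- entropy values after factorization
  have vM : entD (distOf r (fun t => t.1)) = entD (fun m => qM m) := by rw [dM]
  have vMX : entD (distOf r (fun t => (t.1, t.2.1)))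
      = entD (fun m => qM m) - Real.log k := by
    rw [dMX]
    rw [entD_fst (f := fun m => k * qM m)]
    rw [entD_scale k hk (fun m => qM m), hqM1, hcard_X]
    have : c * (k * entD (fun m => qM m) - k * 1 * Real.log k)
        = (c * k) * entD (fun m => qM m) - (c * k) * Real.log k := by ring
    rw [this, hck]
    ring
  set SB : ℝ := ∑ m, ∑ x : Fin n → Bool, entD (sD q m x) with hSB_def
  set SA : ℝ := ∑ m, ∑ x : Fin n → Bool, entD (oD q m x) with hSA_def
  have hSAB : SA = SB := by
    rw [hSA_def, hSB_def]
    exact Finset.sum_congr rfl fun m _ => sum_entD_oD q m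
  have sum_qM_pair : ∑ mx : 𝓜₂ × (Fin n → Bool), qM mx.1 = c := by
    rw [Fintype.sum_prod_type]
    rw [Finset.sum_congr rfl fun m _ => Finset.sum_const (qM m)]
    rw [Finset.sum_congr rfl fun m _ => by
      rw [Finset.card_univ, nsmul_eq_mul, hcard_X]]
    rw [← Finset.mul_sum, hqM1, mul_one]
  have vB : entD (distOf r (fun t => (slF t.2.1 t.2.2, (t.1, t.2.1))))
      = k * SB - Real.log k := by
    rw [dB]
    rw [show (fun b : (Fin n → Bool) × (𝓜₂ × (Fin n → Bool)) =>
          k * sD q b.2.1 b.2.2 b.1)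
        = fun b => (fun cc : (𝓜₂ × (Fin n → Bool)) × (Fin n → Bool) =>
            k * sD q cc.1.1 cc.1.2 cc.2) ((Equiv.prodComm _ _) b) from rfl]
    rw [entD_reindex (Equiv.prodComm _ _)
      (fun cc : (𝓜₂ × (Fin n → Bool)) × (Fin n → Bool) => k * sD q cc.1.1 cc.1.2 cc.2)]
    rw [entD_block (f := fun mx : 𝓜₂ × (Fin n → Bool) => fun a => k * sD q mx.1 mx.2 a)]
    have h1 : ∀ mx : 𝓜₂ × (Fin n → Bool),
        entD (fun a => k * sD q mx.1 mx.2 a)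
        = k * entD (sD q mx.1 mx.2) - k * qM mx.1 * Real.log k := by
      intro mx
      rw [entD_scale k hk (sD q mx.1 mx.2), sum_sD]
    rw [Finset.sum_congr rfl fun mx _ => h1 mx]
    rw [Finset.sum_sub_distrib, ← Finset.mul_sum]
    have h2 : ∑ mx : 𝓜₂ × (Fin n → Bool), k * qM mx.1 * Real.log k
        = k * c * Real.log k := by
      rw [show (fun mx : 𝓜₂ × (Fin n → Bool) => k * qM mx.1 * Real.log k)
          = fun mx => (k * Real.log k) * qM mx.1 from by funext mx; ring]
      rw [← Finset.mul_sum, sum_qM_pair]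
      ring
    rw [h2]
    have h3 : ∑ mx : 𝓜₂ × (Fin n → Bool), entD (sD q mx.1 mx.2) = SB := by
      rw [hSB_def, Fintype.sum_prod_type]
    rw [h3]
    have : k * c * Real.log k = (c * k) * Real.log k := by ring
    rw [this, hck]
    ring
  have vA : entD (distOf r (fun t => (soF t.2.1 t.2.2, (t.1, t.2.1))))
      = k * SA - Real.log k := by
    rw [dA]
    rw [show (fun b : (Fin n → Bool) × (𝓜₂ × (Fin n → Bool)) =>
          k * oD q b.2.1 b.2.2 b.1)
        = fun b => (fun cc : (𝓜₂ × (Fin n → Bool)) × (Fin n → Bool) =>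
            k * oD q cc.1.1 cc.1.2 cc.2) ((Equiv.prodComm _ _) b) from rfl]
    rw [entD_reindex (Equiv.prodComm _ _)
      (fun cc : (𝓜₂ × (Fin n → Bool)) × (Fin n → Bool) => k * oD q cc.1.1 cc.1.2 cc.2)]
    rw [entD_block (f := fun mx : 𝓜₂ × (Fin n → Bool) => fun a => k * oD q mx.1 mx.2 a)]
    have h1 : ∀ mx : 𝓜₂ × (Fin n → Bool),
        entD (fun a => k * oD q mx.1 mx.2 a)
        = k * entD (oD q mx.1 mx.2) - k * qM mx.1 * Real.log k := by
      intro mx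
      rw [entD_scale k hk (oD q mx.1 mx.2), oD_flip, sum_sD]
    rw [Finset.sum_congr rfl fun mx _ => h1 mx]
    rw [Finset.sum_sub_distrib, ← Finset.mul_sum]
    have h2 : ∑ mx : 𝓜₂ × (Fin n → Bool), k * qM mx.1 * Real.log k
        = k * c * Real.log k := by
      rw [show (fun mx : 𝓜₂ × (Fin n → Bool) => k * qM mx.1 * Real.log k)
          = fun mx => (k * Real.log k) * qM mx.1 from by funext mx; ring]
      rw [← Finset.mul_sum, sum_qM_pair]
      ring
    rw [h2]
    have h3 : ∑ mx : 𝓜₂ × (Fin n → Bool), entD (oD q mx.1 mx.2) = SA := by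
      rw [hSA_def, Fintype.sum_prod_type]
    rw [h3]
    have : k * c * Real.log k = (c * k) * Real.log k := by ring
    rw [this, hck]
    ring
  -- the two conditional entropies of interest
  have condB : condEnt p (selSame Xv Yv) (fun ω => (M₂ ω, Xv ω))
      = k * SB - entD (fun m => qM m) := by
    unfold condEnt
    rw [eB, eMX, vB, vMX]
    ring
  have condA : condEnt p (selOpp Xv Yv) (fun ω => (M₂ ω, Xv ω))
      = k * SA - entD (fun m => qM m) := by
    unfold condEnt
    rw [eA, eMX, vA, vMX]
    ring
  have condC : condEnt p Yv M₂
      = (∑ m, entD (fun y => q m y)) - entD (fun m => qM m) := by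
    unfold condEnt
    rw [eYM, eM, vYM, vM]
  constructor
  · rw [condA, condB, hSAB]
  · -- the subadditivity bound
    rw [condC, condB]
    have hkey : ∀ m, c * (entD (fun y => q m y) - qM m * Real.log (qM m))
        ≤ (∑ x : Fin n → Bool, entD (sD q m x)) + ∑ x : Fin n → Bool, entD (oD q m x) := by
      intro m
      have h1 : ∀ x : Fin n → Bool,
          entD (fun y => q m y) - qM m * Real.log (qM m)
          ≤ entD (sD q m x) + entD (oD q m x) := fun x =>
        key_ineq q hq0 m x
      calc c * (entD (fun y => q m y) - qM m * Real.log (qM m))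
          = ∑ _x : Fin n → Bool, (entD (fun y => q m y) - qM m * Real.log (qM m)) := by
            rw [Finset.sum_const, Finset.card_univ, nsmul_eq_mul, hcard_X]
        _ ≤ ∑ x : Fin n → Bool, (entD (sD q m x) + entD (oD q m x)) :=
            Finset.sum_le_sum fun x _ => h1 x
        _ = (∑ x : Fin n → Bool, entD (sD q m x))
            + ∑ x : Fin n → Bool, entD (oD q m x) := Finset.sum_add_distrib
    have htot : c * ((∑ m, entD (fun y => q m y)) - ∑ m, qM m * Real.log (qM m))
        ≤ SB + SA := by
      calc c * ((∑ m, entD (fun y => q m y)) - ∑ m, qM m * Real.log (qM m))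
          = ∑ m, c * (entD (fun y => q m y) - qM m * Real.log (qM m)) := by
            rw [← Finset.sum_sub_distrib, Finset.mul_sum]
        _ ≤ ∑ m, ((∑ x : Fin n → Bool, entD (sD q m x))
            + ∑ x : Fin n → Bool, entD (oD q m x)) :=
            Finset.sum_le_sum fun m _ => hkey m
        _ = SB + SA := by rw [hSB_def, hSA_def, ← Finset.sum_add_distrib]
    have hqMent : entD (fun m => qM m) = -∑ m, qM m * Real.log (qM m) := rfl
    -- multiply htot by k
    have hmul := mul_le_mul_of_nonneg_left htot hk.le
    rw [hSAB] at hmul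
    have hexp : k * (c * ((∑ m, entD (fun y => q m y)) - ∑ m, qM m * Real.log (qM m)))
        = (c * k) * ((∑ m, entD (fun y => q m y)) - ∑ m, qM m * Real.log (qM m)) := by
      ring
    rw [hexp, hck, one_mul] at hmul
    rw [hqMent]
    linarith
end

section
/- (Alice-side entropy bound from Example 2.) Let M₁ be a finite-valued random variable that is conditionally independent of Yⁿ given Xⁿ. Then H(Xⁿ | M₁) ≤ 2·H(Y_Xⁿ | M₁, Yⁿ). (The proof uses that, given Yⁿ, the pair (Y_Xⁿ, Ỹ_Xⁿ) determines Xⁿ, where Ỹ = (1−Y₀, Y₁), and that (Xⁿ, Ỹⁿ) has the same distribution as (Xⁿ, Yⁿ).) -/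
open scoped BigOperators

set_option linter.unusedSectionVars false

section Gen
variable {α κ : Type*} [Fintype α] [Fintype κ] [DecidableEq κ]

lemma distOf_nonneg_s10 {q : α → ℝ} (hq : ∀ x, 0 ≤ q x) (G : α → κ) (k : κ) :
    0 ≤ distOf q G k := by
  apply Finset.sum_nonneg
  intro x _
  split <;> simp [hq x]

lemma sum_distOf_mul (q : α → ℝ) (G : α → κ) (φ : κ → ℝ) :
    ∑ k, distOf q G k * φ k = ∑ x, q x * φ (G x) := by
  unfold distOf
  simp_rw [Finset.sum_mul, ite_mul, zero_mul]
  rw [Finset.sum_comm]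
  apply Finset.sum_congr rfl
  intro x _
  simp

lemma sum_distOf_s10 (q : α → ℝ) (G : α → κ) :
    ∑ k, distOf q G k = ∑ x, q x := by
  have := sum_distOf_mul q G (fun _ => 1)
  simpa using this

lemma le_distOf {q : α → ℝ} (hq : ∀ x, 0 ≤ q x) (G : α → κ) (x : α) :
    q x ≤ distOf q G (G x) := by
  have := Finset.single_le_sum (f := fun y => if G y = G x then q y else 0)
    (fun i _ => by split <;> simp [hq i]) (Finset.mem_univ x)
  simpa [distOf] using this

lemma distOf_inj (q : α → ℝ) {G : α → κ} (hG : Function.Injective G) (x : α) :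
    distOf q G (G x) = q x := by
  unfold distOf
  rw [Finset.sum_eq_single x]
  · simp
  · intro y _ hy
    rw [if_neg (fun h => hy (hG h))]
  · intro h; exact absurd (Finset.mem_univ x) h

lemma distOf_equiv (q : α → ℝ) (e : α ≃ κ) (k : κ) :
    distOf q e k = q (e.symm k) := by
  have := distOf_inj q e.injective (e.symm k)
  simpa using this

lemma entD_distOf (q : α → ℝ) (G : α → κ) :
    entD (distOf q G) = -∑ x, q x * Real.log (distOf q G (G x)) := by
  unfold entD
  rw [sum_distOf_mul q G (fun k => Real.log (distOf q G k))]

lemma entD_distOf_le {q : α → ℝ} (hq : ∀ x, 0 ≤ q x) (G : α → κ) :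
    entD (distOf q G) ≤ entD q := by
  rw [entD_distOf]
  unfold entD
  rw [neg_le_neg_iff]
  apply Finset.sum_le_sum
  intro x _
  rcases eq_or_lt_of_le (hq x) with h | h
  · simp [← h]
  · exact mul_le_mul_of_nonneg_left (Real.log_le_log h (le_distOf hq G x)) (hq x)

lemma entD_distOf_inj (q : α → ℝ) {G : α → κ} (hG : Function.Injective G) :
    entD (distOf q G) = entD q := by
  rw [entD_distOf]
  unfold entD
  congr 1
  apply Finset.sum_congr rfl
  intro x _
  rw [distOf_inj q hG]

lemma entD_comp_equiv {β : Type*} [Fintype β] (q : κ → ℝ) (e : β ≃ κ) :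
    entD (fun b => q (e b)) = entD q := by
  unfold entD
  exact congrArg Neg.neg (Equiv.sum_comp e (fun k => q k * Real.log (q k)))

lemma distOf_comp_s10 {Ω : Type*} [Fintype Ω] [DecidableEq α] (p : Ω → ℝ) (U : Ω → α) (G : α → κ) :
    distOf p (fun ω => G (U ω)) = distOf (distOf p U) G := by
  funext k
  unfold distOf
  have h : ∀ (c : Prop) (h : Decidable c) (f : Ω → ℝ),
      (if c then ∑ ω, f ω else 0) = ∑ ω, if c then f ω else 0 := by
    intro c hc f; split <;> simp
  simp_rw [h]
  rw [Finset.sum_comm]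
  apply Finset.sum_congr rfl
  intro ω _
  rw [Finset.sum_eq_single (U ω)]
  · simp
  · intro a _ ha
    simp only [if_neg (show ¬ U ω = a from fun h' => ha h'.symm), ite_self]
  · intro h'; exact absurd (Finset.mem_univ _) h'

lemma entD_prod {β γ : Type*} [Fintype β] [Fintype γ] (q₁ : β → ℝ) (q₂ : γ → ℝ)
    (h₁ : ∑ a, q₁ a = 1) (h₂ : ∑ b, q₂ b = 1) :
    entD (fun x : β × γ => q₁ x.1 * q₂ x.2) = entD q₁ + entD q₂ := by
  unfold entD
  rw [Fintype.sum_prod_type]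
  have key : ∀ u v : ℝ, u * v * Real.log (u * v)
      = v * (u * Real.log u) + u * (v * Real.log v) := by
    intro u v
    rcases eq_or_ne u 0 with h | h
    · simp [h]
    rcases eq_or_ne v 0 with h' | h'
    · simp [h']
    rw [Real.log_mul h h']; ring
  simp_rw [key, Finset.sum_add_distrib, ← Finset.mul_sum, ← Finset.sum_mul]
  rw [h₁, h₂]
  ring

end Gen


section CMI
variable {β γ δ : Type*} [Fintype β] [Fintype γ] [Fintype δ]
  [DecidableEq β] [DecidableEq γ] [DecidableEq δ]

lemma distOf_snd {μ ν : Type*} [Fintype μ] [Fintype ν] [DecidableEq ν] (r : μ × ν → ℝ) (c : ν) :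
    distOf r Prod.snd c = ∑ a, r (a, c) := by
  unfold distOf
  rw [Fintype.sum_prod_type]
  apply Finset.sum_congr rfl
  intro a _
  simp

lemma distOf_fst {μ ν : Type*} [Fintype μ] [Fintype ν] [DecidableEq μ] (r : μ × ν → ℝ) (a : μ) :
    distOf r Prod.fst a = ∑ c, r (a, c) := by
  unfold distOf
  rw [Fintype.sum_prod_type, Finset.sum_eq_single a]
  · simp
  · intro a' _ ha'; apply Finset.sum_eq_zero; intro c _; exact if_neg ha'
  · intro h; exact absurd (Finset.mem_univ _) h

noncomputable def margAC (q : β × γ × δ → ℝ) : β × δ → ℝ :=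
  distOf q (fun x => (x.1, x.2.2))

noncomputable def margBC (q : β × γ × δ → ℝ) : γ × δ → ℝ :=
  distOf q Prod.snd

noncomputable def margC (q : β × γ × δ → ℝ) : δ → ℝ :=
  distOf q (fun x => x.2.2)

lemma margC_eq_sum_margAC (q : β × γ × δ → ℝ) (c : δ) :
    margC q c = ∑ a, margAC q (a, c) := by
  have h : margC q = distOf (margAC q) Prod.snd := by
    rw [margC, margAC, ← distOf_comp_s10 q (fun x => (x.1, x.2.2)) Prod.snd]
  rw [h, distOf_snd]

lemma margC_eq_sum_margBC (q : β × γ × δ → ℝ) (c : δ) :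
    margC q c = ∑ b, margBC q (b, c) := by
  have h : margC q = distOf (margBC q) Prod.snd := by
    rw [margC, margBC, ← distOf_comp_s10 q Prod.snd Prod.snd]
  rw [h, distOf_snd]

lemma cmi_key (q : β × γ × δ → ℝ) (hq : ∀ x, 0 ≤ q x) :
    0 ≤ entD (margAC q) + entD (margBC q) - entD q - entD (margC q) ∧
    ((entD (margAC q) + entD (margBC q) - entD q - entD (margC q) = 0 →
      ∀ x : β × γ × δ, q x * margC q x.2.2 = margAC q (x.1, x.2.2) * margBC q x.2)
    ∧ ((∀ x : β × γ × δ, q x * margC q x.2.2 = margAC q (x.1, x.2.2) * margBC q x.2) →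
      entD (margAC q) + entD (margBC q) - entD q - entD (margC q) = 0)) := by
  classical
  have hAC : ∀ k, 0 ≤ margAC q k := distOf_nonneg_s10 hq _
  have hBC : ∀ k, 0 ≤ margBC q k := distOf_nonneg_s10 hq _
  have hC : ∀ k, 0 ≤ margC q k := distOf_nonneg_s10 hq _
  have hle1 : ∀ x : β × γ × δ, q x ≤ margAC q (x.1, x.2.2) := fun x =>
    le_distOf hq (fun x => (x.1, x.2.2)) x
  have hle2 : ∀ x : β × γ × δ, q x ≤ margBC q x.2 := fun x => le_distOf hq Prod.snd x
  have hle3 : ∀ x : β × γ × δ, margAC q (x.1, x.2.2) ≤ margC q x.2.2 := by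
    intro x
    rw [margC_eq_sum_margAC]
    exact Finset.single_le_sum (f := fun a => margAC q (a, x.2.2))
      (fun i _ => hAC _) (Finset.mem_univ x.1)
  -- the nonnegative pointwise term
  set r : β × γ × δ → ℝ := fun x =>
    if margC q x.2.2 = 0 then 0 else margAC q (x.1, x.2.2) * margBC q x.2 / margC q x.2.2 with hr_def
  set D : β × γ × δ → ℝ := fun x =>
    Real.log (q x) + Real.log (margC q x.2.2)
      - Real.log (margAC q (x.1, x.2.2)) - Real.log (margBC q x.2) with hD_def
  have hI : entD (margAC q) + entD (margBC q) - entD q - entD (margC q)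
      = ∑ x, q x * D x := by
    rw [margAC, margBC, margC,
      entD_distOf q (fun x : β × γ × δ => (x.1, x.2.2)),
      entD_distOf q (Prod.snd : β × γ × δ → γ × δ),
      entD_distOf q (fun x : β × γ × δ => x.2.2)]
    unfold entD
    rw [hD_def]
    simp only [mul_add, mul_sub, Finset.sum_add_distrib, Finset.sum_sub_distrib]
    rw [margAC, margBC, margC]
    ring
  have hrq : ∑ x, r x = ∑ x, q x := by
    have hstep : ∀ c : δ, (∑ a, ∑ b, r (a, b, c)) = margC q c := by
      intro c
      by_cases hc : margC q c = 0
      · simp [hr_def, hc]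
      · have e1 : ∀ a b, r (a, b, c)
            = margAC q (a, c) * (margBC q (b, c) * (margC q c)⁻¹) := by
          intro a b; simp [hr_def, hc, div_eq_mul_inv, mul_assoc]
        calc ∑ a, ∑ b, r (a, b, c)
            = ∑ a, margAC q (a, c) * ((∑ b, margBC q (b, c)) * (margC q c)⁻¹) := by
              apply Finset.sum_congr rfl; intro a _
              simp_rw [e1]
              rw [← Finset.mul_sum, ← Finset.sum_mul]
          _ = (∑ a, margAC q (a, c)) * ((∑ b, margBC q (b, c)) * (margC q c)⁻¹) := by
              rw [← Finset.sum_mul]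
          _ = margC q c := by
              rw [← margC_eq_sum_margAC, ← margC_eq_sum_margBC]
              field_simp
    calc ∑ x : β × γ × δ, r x = ∑ a, ∑ b, ∑ c, r (a, b, c) := by
          rw [Fintype.sum_prod_type]; apply Finset.sum_congr rfl; intro a _
          rw [Fintype.sum_prod_type]
      _ = ∑ a, ∑ c, ∑ b, r (a, b, c) := by
          apply Finset.sum_congr rfl; intro a _
          rw [Finset.sum_comm]
      _ = ∑ c, ∑ a, ∑ b, r (a, b, c) := Finset.sum_comm
      _ = ∑ c, margC q c := Finset.sum_congr rfl (fun c _ => hstep c)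
      _ = ∑ x, q x := sum_distOf_s10 q _
  have hpt : ∀ x : β × γ × δ, (0 ≤ q x * D x - q x + r x) ∧
      (q x * D x - q x + r x = 0 → q x * margC q x.2.2 = margAC q (x.1, x.2.2) * margBC q x.2) ∧
      (q x * margC q x.2.2 = margAC q (x.1, x.2.2) * margBC q x.2 → q x * D x - q x + r x = 0) := by
    intro x
    rcases eq_or_lt_of_le (hq x) with h0 | h0
    · -- q x = 0
      have hrx : 0 ≤ r x := by
        rw [hr_def]; dsimp only
        split
        · exact le_rfl
        · exact div_nonneg (mul_nonneg (hAC _) (hBC _)) (hC _)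
      refine ⟨?_, ?_, ?_⟩
      · rw [← h0]; simpa using hrx
      · intro heq
        have hr0 : r x = 0 := by rw [← h0] at heq; simpa using heq
        rw [← h0, zero_mul]
        by_cases hc : margC q x.2.2 = 0
        · have hA0 : margAC q (x.1, x.2.2) = 0 :=
            le_antisymm (hc ▸ hle3 x) (hAC _)
          rw [hA0, zero_mul]
        · rw [hr_def] at hr0; dsimp only at hr0
          rw [if_neg hc] at hr0
          exact ((div_eq_zero_iff.mp hr0).resolve_right hc).symm
      · intro hfac
        have hr0 : r x = 0 := by
          rw [hr_def]; dsimp only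
          split
          · rfl
          · rw [← hfac, ← h0, zero_mul, zero_div]
        rw [← h0, hr0]
        ring
    · -- q x > 0
      have h1 : 0 < margAC q (x.1, x.2.2) := lt_of_lt_of_le h0 (hle1 x)
      have h2 : 0 < margBC q x.2 := lt_of_lt_of_le h0 (hle2 x)
      have h3 : 0 < margC q x.2.2 := lt_of_lt_of_le h1 (hle3 x)
      have hu : (0:ℝ) < q x * margC q x.2.2 := mul_pos h0 h3
      have hv : (0:ℝ) < margAC q (x.1, x.2.2) * margBC q x.2 := mul_pos h1 h2
      have hexpr : q x * D x - q x + r x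
          = q x * ((margAC q (x.1, x.2.2) * margBC q x.2 / (q x * margC q x.2.2) - 1)
              - Real.log (margAC q (x.1, x.2.2) * margBC q x.2 / (q x * margC q x.2.2))) := by
        rw [hD_def, hr_def]; dsimp only
        rw [if_neg (ne_of_gt h3),
          Real.log_div (ne_of_gt hv) (ne_of_gt hu),
          Real.log_mul (ne_of_gt h0) (ne_of_gt h3),
          Real.log_mul (ne_of_gt h1) (ne_of_gt h2)]
        field_simp
        ring
      have hkey : 0 ≤ (margAC q (x.1, x.2.2) * margBC q x.2 / (q x * margC q x.2.2) - 1)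
          - Real.log (margAC q (x.1, x.2.2) * margBC q x.2 / (q x * margC q x.2.2)) :=
        sub_nonneg.mpr (Real.log_le_sub_one_of_pos (div_pos hv hu))
      refine ⟨?_, ?_, ?_⟩
      · rw [hexpr]; exact mul_nonneg (le_of_lt h0) hkey
      · intro heq
        rw [hexpr] at heq
        have h4 : (margAC q (x.1, x.2.2) * margBC q x.2 / (q x * margC q x.2.2) - 1)
            - Real.log (margAC q (x.1, x.2.2) * margBC q x.2 / (q x * margC q x.2.2)) = 0 := by
          rcases mul_eq_zero.mp heq with h | h
          · exact absurd h (ne_of_gt h0)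
          · exact h
        have h5 : margAC q (x.1, x.2.2) * margBC q x.2 / (q x * margC q x.2.2) = 1 := by
          by_contra h6
          have := Real.log_lt_sub_one_of_pos (div_pos hv hu) h6
          linarith
        exact ((div_eq_one_iff_eq (ne_of_gt hu)).mp h5).symm
      · intro hfac
        have h5 : margAC q (x.1, x.2.2) * margBC q x.2 / (q x * margC q x.2.2) = 1 := by
          rw [← hfac, div_self (ne_of_gt hu)]
        rw [hexpr, h5]
        simp
  have hIsum : entD (margAC q) + entD (margBC q) - entD q - entD (margC q)
      = ∑ x, (q x * D x - q x + r x) := by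
    rw [hI]
    simp only [Finset.sum_add_distrib, Finset.sum_sub_distrib]
    rw [hrq]
    ring
  constructor
  · rw [hIsum]
    exact Finset.sum_nonneg (fun x _ => (hpt x).1)
  constructor
  · intro hzero x
    rw [hIsum] at hzero
    have := (Finset.sum_eq_zero_iff_of_nonneg (fun x _ => (hpt x).1)).mp hzero x (Finset.mem_univ x)
    exact (hpt x).2.1 this
  · intro hfac
    rw [hIsum]
    exact Finset.sum_eq_zero (fun x _ => (hpt x).2.2 (hfac x))

end CMI


section Sel
variable {μ ν ξ ρ : Type*} [Fintype μ] [Fintype ν] [Fintype ξ] [Fintype ρ]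
  [DecidableEq μ] [DecidableEq ν] [DecidableEq ξ] [DecidableEq ρ]

lemma distOf_12 (r : μ × ν × ξ → ℝ) (m : μ) (y : ν) :
    distOf r (fun t => (t.1, t.2.1)) (m, y) = ∑ c, r (m, y, c) := by
  unfold distOf
  rw [Fintype.sum_prod_type, Finset.sum_eq_single m]
  · rw [Fintype.sum_prod_type, Finset.sum_eq_single y]
    · apply Finset.sum_congr rfl
      intro c _
      simp
    · intro y' _ hy'
      apply Finset.sum_eq_zero; intro c _
      rw [if_neg]
      simp only [Prod.mk.injEq, not_and]
      intro _ h; exact absurd h hy'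
    · intro h; exact absurd (Finset.mem_univ _) h
  · intro m' _ hm'
    apply Finset.sum_eq_zero; intro w _
    rw [if_neg]
    simp only [Prod.mk.injEq, not_and]
    intro h; exact absurd h hm'
  · intro h; exact absurd (Finset.mem_univ _) h

lemma distOf_sel (r : μ × ν × ξ → ℝ) (s : ξ → ν → ρ) (b : ρ) (m : μ) (y : ν) :
    distOf r (fun t => (s t.2.2 t.2.1, (t.1, t.2.1))) (b, (m, y))
      = ∑ x, (if s x y = b then r (m, y, x) else 0) := by
  unfold distOf
  rw [Fintype.sum_prod_type, Finset.sum_eq_single m]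
  · rw [Fintype.sum_prod_type, Finset.sum_eq_single y]
    · apply Finset.sum_congr rfl
      intro c _
      congr 1
      simp [Prod.ext_iff, and_comm]
    · intro y' _ hy'
      apply Finset.sum_eq_zero; intro c _
      rw [if_neg]
      simp only [Prod.mk.injEq, not_and]
      intro _ _ h; exact absurd h hy'
    · intro h; exact absurd (Finset.mem_univ _) h
  · intro m' _ hm'
    apply Finset.sum_eq_zero; intro w _
    rw [if_neg]
    simp only [Prod.mk.injEq, not_and]
    intro _ h; exact absurd h hm'
  · intro h; exact absurd (Finset.mem_univ _) h

end Sel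


section Bools
variable {n : ℕ}

def afun (x : Fin n → Bool) (y : Fin n → Bool × Bool) : Fin n → Bool :=
  fun i => if x i then (y i).2 else (y i).1

def bfun (x : Fin n → Bool) (y : Fin n → Bool × Bool) : Fin n → Bool :=
  fun i => if x i then (y i).2 else !(y i).1

def recov (a b : Fin n → Bool) (y : Fin n → Bool × Bool) : Fin n → Bool :=
  fun i => if (y i).1 = (y i).2 then (b i == (y i).2) else (a i == (y i).2)

def sflip (y : Fin n → Bool × Bool) : Fin n → Bool × Bool :=
  fun i => (!(y i).1, (y i).2)

lemma sflip_invol : Function.Involutive (sflip (n := n)) := by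
  intro y; funext i; simp [sflip]

lemma recov_eq (x : Fin n → Bool) (y : Fin n → Bool × Bool) :
    recov (afun x y) (bfun x y) y = x := by
  funext i
  rcases hx : x i <;> rcases h1 : (y i).1 <;> rcases h2 : (y i).2 <;>
    simp [recov, afun, bfun, hx, h1, h2]

lemma afun_sflip (x : Fin n → Bool) (y : Fin n → Bool × Bool) :
    afun x (sflip y) = bfun x y := by
  funext i
  rcases hx : x i <;> simp [afun, bfun, sflip, hx]

lemma selSame_eq_afun {Ω : Type*} (Xv : Ω → Fin n → Bool) (Yv : Ω → Fin n → Bool × Bool)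
    (ω : Ω) : selSame Xv Yv ω = afun (Xv ω) (Yv ω) := rfl

end Bools


set_option maxHeartbeats 1000000 in
/-- **Alice-side entropy bound from Example 2.** If `M₁` is conditionally independent of
`Yⁿ` given `Xⁿ`, then `H(Xⁿ | M₁) ≤ 2 · H(Y_Xⁿ | M₁, Yⁿ)`. -/
theorem alice_side_entropy_bound {Ω 𝓜₁ : Type}
    [Fintype Ω] [Fintype 𝓜₁] [DecidableEq 𝓜₁]
    (n : ℕ) (p : Ω → ℝ) (hp : IsPMF p)
    (Xv : Ω → Fin n → Bool) (Yv : Ω → Fin n → Bool × Bool)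
    (hiid : UnifIID p Xv Yv)
    (M₁ : Ω → 𝓜₁)
    (hci : condMutInfo p M₁ Yv Xv = 0) :
    condEnt p Xv M₁ ≤ 2 * condEnt p (selSame Xv Yv) (fun ω => (M₁ ω, Yv ω)) := by
  classical
  set T : Ω → 𝓜₁ × (Fin n → Bool × Bool) × (Fin n → Bool) :=
    fun ω => (M₁ ω, Yv ω, Xv ω) with hT
  set q3 := distOf p T with hq3
  have hq3nn : ∀ t, 0 ≤ q3 t := distOf_nonneg_s10 hp.1 T
  have sum_q3 : ∑ t, q3 t = 1 := by rw [hq3, sum_distOf_s10]; exact hp.2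
  -- cardinality facts
  have cardYt : Fintype.card (Fin n → Bool × Bool) = 4 ^ n := by
    simp [Fintype.card_fun]
  have h41 : (4:ℝ)^n * (1/4:ℝ)^n = 1 := by rw [← mul_pow]; norm_num
  -- conditional independence gives vanishing of the dist-level cmi for q3
  have hcmi3 : entD (margAC q3) + entD (margBC q3) - entD q3 - entD (margC q3) = 0 := by
    have eAC : distOf p (fun ω => (M₁ ω, Xv ω)) = margAC q3 :=
      distOf_comp_s10 p T (fun t => (t.1, t.2.2))
    have eBC : distOf p (fun ω => (Yv ω, Xv ω)) = margBC q3 :=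
      distOf_comp_s10 p T Prod.snd
    have eC : distOf p Xv = margC q3 :=
      distOf_comp_s10 p T (fun t => t.2.2)
    have eQ : distOf p (fun ω => (M₁ ω, Yv ω, Xv ω)) = q3 := rfl
    rw [condMutInfo, entRV, entRV, entRV, entRV, eAC, eBC, eC, eQ] at hci
    linarith [hci]
  have hfact := (cmi_key q3 hq3nn).2.1 hcmi3
  -- value of the (Y, X) marginal
  have hBCval : ∀ (y : Fin n → Bool × Bool) (x : Fin n → Bool),
      margBC q3 (y, x) = (1/8:ℝ)^n := by
    intro y x
    have eBC : distOf p (fun ω => (Yv ω, Xv ω)) = margBC q3 :=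
      distOf_comp_s10 p T Prod.snd
    rw [← eBC, ← hiid x y]
    unfold distOf probOf
    apply Finset.sum_congr rfl
    intro ω _
    by_cases h : Xv ω = x ∧ Yv ω = y
    · rw [if_pos h, if_pos (show (Yv ω, Xv ω) = (y, x) by rw [h.1, h.2])]
    · rw [if_neg (fun hcon : (Yv ω, Xv ω) = (y, x) =>
        h ⟨congrArg Prod.snd hcon, congrArg Prod.fst hcon⟩), if_neg h]
  have hCval : ∀ x : Fin n → Bool, margC q3 x = (1/2:ℝ)^n := by
    intro x
    rw [margC_eq_sum_margBC]
    simp only [hBCval]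
    rw [Finset.sum_const, Finset.card_univ, cardYt, nsmul_eq_mul]
    push_cast
    rw [← mul_pow]
    norm_num
  -- the joint factorizes
  have q3fact : ∀ (m : 𝓜₁) (y : Fin n → Bool × Bool) (x : Fin n → Bool),
      q3 (m, y, x) = margAC q3 (m, x) * (1/4:ℝ)^n := by
    intro m y x
    have h := hfact (m, y, x)
    simp only at h
    rw [hCval, hBCval] at h
    have h18 : (1/8:ℝ)^n = (1/4:ℝ)^n * (1/2:ℝ)^n := by rw [← mul_pow]; norm_num
    rw [h18, ← mul_assoc] at h
    exact mul_right_cancel₀ (pow_ne_zero n (by norm_num)) h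
  -- the M marginal
  have hMval : distOf q3 Prod.fst = fun m => ∑ x, margAC q3 (m, x) := by
    funext m
    rw [distOf_fst, Fintype.sum_prod_type, Finset.sum_comm]
    apply Finset.sum_congr rfl
    intro x _
    simp only [q3fact]
    rw [Finset.sum_const, Finset.card_univ, cardYt, nsmul_eq_mul]
    push_cast
    calc (4:ℝ)^n * (margAC q3 (m, x) * (1/4)^n)
        = margAC q3 (m, x) * ((4:ℝ)^n * (1/4)^n) := by ring
      _ = margAC q3 (m, x) := by rw [h41, mul_one]
  have hMY : distOf q3 (fun t => (t.1, t.2.1))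
      = fun z : 𝓜₁ × (Fin n → Bool × Bool) => (∑ x, margAC q3 (z.1, x)) * (1/4:ℝ)^n := by
    funext z
    obtain ⟨m, y⟩ := z
    rw [distOf_12]
    simp only [q3fact]
    rw [← Finset.sum_mul]
  -- summing facts
  have sumAC : ∑ k : 𝓜₁ × (Fin n → Bool), margAC q3 k = 1 := by
    rw [margAC, sum_distOf_s10]; exact sum_q3
  have sum_qM : ∑ m, (∑ x, margAC q3 (m, x)) = 1 := by
    rw [← Fintype.sum_prod_type]; exact sumAC
  have sum_cst : ∑ _y : (Fin n → Bool × Bool), ((1/4:ℝ)^n) = 1 := by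
    rw [Finset.sum_const, Finset.card_univ, cardYt, nsmul_eq_mul]
    push_cast
    exact h41
  -- the reordering equivalence
  let e1 : (𝓜₁ × (Fin n → Bool × Bool) × (Fin n → Bool)) ≃
      ((Fin n → Bool) × 𝓜₁) × (Fin n → Bool × Bool) :=
    { toFun := fun t => ((t.2.2, t.1), t.2.1)
      invFun := fun z => (z.1.2, z.2, z.1.1)
      left_inv := fun t => rfl
      right_inv := fun z => rfl }
  have hXMYdist : distOf q3 ⇑e1
      = fun z : ((Fin n → Bool) × 𝓜₁) × (Fin n → Bool × Bool) =>
          margAC q3 (z.1.2, z.1.1) * (1/4:ℝ)^n := by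
    funext z
    obtain ⟨⟨x, m⟩, y⟩ := z
    rw [distOf_equiv]
    exact q3fact m y x
  have HXMY : entD (distOf q3 ⇑e1)
      = entD (fun z : (Fin n → Bool) × 𝓜₁ => margAC q3 (z.2, z.1))
        + entD (fun _ : (Fin n → Bool × Bool) => (1/4:ℝ)^n) := by
    rw [hXMYdist]
    exact entD_prod (fun z : (Fin n → Bool) × 𝓜₁ => margAC q3 (z.2, z.1))
      (fun _ : (Fin n → Bool × Bool) => (1/4:ℝ)^n)
      (by rw [Fintype.sum_prod_type, Finset.sum_comm]; exact sum_qM) sum_cst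
  have HswapAC : entD (fun z : (Fin n → Bool) × 𝓜₁ => margAC q3 (z.2, z.1))
      = entD (margAC q3) :=
    entD_comp_equiv (margAC q3) (Equiv.prodComm (Fin n → Bool) 𝓜₁)
  have HMY : entD (distOf q3 (fun t => (t.1, t.2.1)))
      = entD (fun m => ∑ x, margAC q3 (m, x))
        + entD (fun _ : (Fin n → Bool × Bool) => (1/4:ℝ)^n) := by
    rw [hMY]
    exact entD_prod _ _ sum_qM sum_cst
  have HXM : entD (distOf q3 (fun t => (t.2.2, t.1))) = entD (margAC q3) := by
    have h2 : distOf q3 (fun t : 𝓜₁ × (Fin n → Bool × Bool) × (Fin n → Bool) => (t.2.2, t.1))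
        = distOf (margAC q3) (⇑(Equiv.prodComm 𝓜₁ (Fin n → Bool))) :=
      distOf_comp_s10 q3 (fun t => (t.1, t.2.2)) (⇑(Equiv.prodComm 𝓜₁ (Fin n → Bool)))
    rw [h2, entD_distOf_inj _ (Equiv.injective _)]
  -- the five-tuple variable
  set q5 := distOf q3 (fun t : 𝓜₁ × (Fin n → Bool × Bool) × (Fin n → Bool) =>
    (afun t.2.2 t.2.1, bfun t.2.2 t.2.1, (t.1, t.2.1))) with hq5
  have hq5nn : ∀ t, 0 ≤ q5 t := distOf_nonneg_s10 hq3nn _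
  -- H(V) equals H(X, M, Y)
  have hf'inj : Function.Injective
      (fun z : ((Fin n → Bool) × 𝓜₁) × (Fin n → Bool × Bool) =>
        (afun z.1.1 z.2, bfun z.1.1 z.2, (z.1.2, z.2))) := by
    have : Function.LeftInverse
        (fun w : (Fin n → Bool) × (Fin n → Bool) × (𝓜₁ × (Fin n → Bool × Bool)) =>
          ((recov w.1 w.2.1 w.2.2.2, w.2.2.1), w.2.2.2))
        (fun z : ((Fin n → Bool) × 𝓜₁) × (Fin n → Bool × Bool) =>
          (afun z.1.1 z.2, bfun z.1.1 z.2, (z.1.2, z.2))) := by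
      intro z
      obtain ⟨⟨x, m⟩, y⟩ := z
      simp only [recov_eq]
    exact this.injective
  have Hq5 : entD q5 = entD (distOf q3 ⇑e1) := by
    have h5 : q5 = distOf (distOf q3 ⇑e1)
        (fun z : ((Fin n → Bool) × 𝓜₁) × (Fin n → Bool × Bool) =>
          (afun z.1.1 z.2, bfun z.1.1 z.2, (z.1.2, z.2))) :=
      distOf_comp_s10 q3 ⇑e1 (fun z => (afun z.1.1 z.2, bfun z.1.1 z.2, (z.1.2, z.2)))
    rw [h5, entD_distOf_inj _ hf'inj]
  -- marginals of q5
  have hACq5 : margAC q5 = distOf q3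
      (fun t : 𝓜₁ × (Fin n → Bool × Bool) × (Fin n → Bool) =>
        (afun t.2.2 t.2.1, (t.1, t.2.1))) :=
    (distOf_comp_s10 q3 (fun t : 𝓜₁ × (Fin n → Bool × Bool) × (Fin n → Bool) =>
      (afun t.2.2 t.2.1, bfun t.2.2 t.2.1, (t.1, t.2.1))) (fun x => (x.1, x.2.2))).symm
  have hBCq5 : margBC q5 = distOf q3
      (fun t : 𝓜₁ × (Fin n → Bool × Bool) × (Fin n → Bool) =>
        (bfun t.2.2 t.2.1, (t.1, t.2.1))) :=
    (distOf_comp_s10 q3 (fun t : 𝓜₁ × (Fin n → Bool × Bool) × (Fin n → Bool) =>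
      (afun t.2.2 t.2.1, bfun t.2.2 t.2.1, (t.1, t.2.1))) Prod.snd).symm
  have hCq5 : margC q5 = distOf q3 (fun t => (t.1, t.2.1)) :=
    (distOf_comp_s10 q3 (fun t : 𝓜₁ × (Fin n → Bool × Bool) × (Fin n → Bool) =>
      (afun t.2.2 t.2.1, bfun t.2.2 t.2.1, (t.1, t.2.1))) (fun x => x.2.2)).symm
  -- H(B | M Y) = H(A | M Y) via the flip symmetry
  let E : ((Fin n → Bool) × 𝓜₁ × (Fin n → Bool × Bool)) ≃
      ((Fin n → Bool) × 𝓜₁ × (Fin n → Bool × Bool)) :=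
    Function.Involutive.toPerm (fun k => (k.1, k.2.1, sflip k.2.2))
      (by intro k; simp [sflip_invol k.2.2])
  have hBA : distOf q3 (fun t : 𝓜₁ × (Fin n → Bool × Bool) × (Fin n → Bool) =>
        (bfun t.2.2 t.2.1, (t.1, t.2.1)))
      = fun k => distOf q3 (fun t : 𝓜₁ × (Fin n → Bool × Bool) × (Fin n → Bool) =>
        (afun t.2.2 t.2.1, (t.1, t.2.1))) (E k) := by
    funext k
    obtain ⟨b, m, y⟩ := k
    have hEk : E (b, m, y) = (b, m, sflip y) := rfl
    rw [hEk, distOf_sel q3 bfun b m y, distOf_sel q3 afun b m (sflip y)]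
    apply Finset.sum_congr rfl
    intro x _
    rw [afun_sflip, q3fact m (sflip y) x, ← q3fact m y x]
  have HBCeq : entD (margBC q5) = entD (margAC q5) := by
    rw [hACq5, hBCq5, hBA]
    exact entD_comp_equiv _ E
  -- the cmi inequality for q5
  have hineq := (cmi_key q5 hq5nn).1
  -- bridge to the goal
  have bXM : distOf p (fun ω => (Xv ω, M₁ ω)) = distOf q3 (fun t => (t.2.2, t.1)) :=
    distOf_comp_s10 p T (fun t => (t.2.2, t.1))
  have bM : distOf p M₁ = distOf q3 Prod.fst :=
    distOf_comp_s10 p T Prod.fst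
  have bAC : distOf p (fun ω => (selSame Xv Yv ω, (M₁ ω, Yv ω)))
      = margAC q5 := by
    rw [hACq5]
    exact distOf_comp_s10 p T (fun t => (afun t.2.2 t.2.1, (t.1, t.2.1)))
  have bC : distOf p (fun ω => (M₁ ω, Yv ω)) = margC q5 := by
    rw [hCq5]
    exact distOf_comp_s10 p T (fun t => (t.1, t.2.1))
  have F3 : entD (margC q5) = entD (fun m => ∑ x, margAC q3 (m, x))
      + entD (fun _ : (Fin n → Bool × Bool) => (1/4:ℝ)^n) := by
    rw [hCq5, HMY]
  have F4 : entD q5 = entD (margAC q3)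
      + entD (fun _ : (Fin n → Bool × Bool) => (1/4:ℝ)^n) := by
    rw [Hq5, HXMY, HswapAC]
  rw [condEnt, condEnt, entRV, entRV, entRV, entRV, bXM, bM, bAC, bC, HXM, hMval]
  rw [HBCeq] at hineq
  linarith [hineq, F3, F4]
end
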